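/- arXiv:2206.06099 — 8 statements merged into one kernel-verified Lean document; each statement's English description precedes it below -/
import Mathlib

section
/- Let M be a compact metric space with Lebesgue covering dimension dim M ≤ s. Then there exists a total order T on M for which Snake(M,T) ≤ 2s + 1. -/
open Metric Set

/-- The pair `(U₁, U₂)` contains a snake of length `s` with respect to the
strict total order `T`: a `T`-increasing sequence `a₀ <_T a₁ <_T ⋯ <_T a_s`
with even-indexed points in `U₁` and odd-indexed points in `U₂`. -/
def HasSnake {M : Type*} (T : M → M → Prop) (U₁ U₂ : Set M) (s : ℕ) : Prop :=
  ∃ a : Fin (s + 1) → M,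
    (∀ i j : Fin (s + 1), i < j → T (a i) (a j)) ∧
    (∀ i : Fin (s + 1), Even (i : ℕ) → a i ∈ U₁) ∧
    (∀ i : Fin (s + 1), Odd (i : ℕ) → a i ∈ U₂)

/-- The snake number `Snake_T(x, y)`: the greatest `s` such that for every `ε > 0`
the pair `(B_ε(x), B_ε(y))` contains a snake of length `s`; `∞` if no greatest exists. -/
noncomputable def snakeNum {M : Type*} [MetricSpace M] (T : M → M → Prop) (x y : M) : ℕ∞ :=
  ⨆ s ∈ {s : ℕ | ∀ ε : ℝ, 0 < ε → HasSnake T (ball x ε) (ball y ε) s}, (s : ℕ∞)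

/-- The snake number `Snake(M, T)` of the ordered metric space: the supremum of
`Snake_T(x, y)` over all pairs of distinct points. -/
noncomputable def snakeNumSpace {M : Type*} [MetricSpace M] (T : M → M → Prop) : ℕ∞ :=
  ⨆ (x : M) (y : M) (_ : x ≠ y), snakeNum T x y

/-- The Lebesgue covering dimension of `M` is at most `n`: every finite open cover
has a finite open refinement in which no point belongs to more than `n + 1` sets. -/
def CovDimLE (M : Type*) [TopologicalSpace M] (n : ℤ) : Prop :=
  ∀ 𝒰 : Set (Set M), 𝒰.Finite → (∀ U ∈ 𝒰, IsOpen U) → ⋃₀ 𝒰 = Set.univ →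
    ∃ 𝒱 : Set (Set M), 𝒱.Finite ∧ (∀ V ∈ 𝒱, IsOpen V) ∧ ⋃₀ 𝒱 = Set.univ ∧
      (∀ V ∈ 𝒱, ∃ U ∈ 𝒰, V ⊆ U) ∧
      ∀ x : M, ({V ∈ 𝒱 | x ∈ V}.ncard : ℤ) ≤ n + 1

namespace SnakeAux

open Filter


/-- Lexicographic strict order on `ℕ → ℕ`. -/
def LexLt (u v : ℕ → ℕ) : Prop := ∃ j, (∀ k < j, u k = v k) ∧ u j < v j

lemma lexLt_irrefl (u : ℕ → ℕ) : ¬ LexLt u u := fun ⟨_, _, h⟩ => lt_irrefl _ h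

lemma lexLt_trans {u v w : ℕ → ℕ} (h1 : LexLt u v) (h2 : LexLt v w) : LexLt u w := by
  obtain ⟨j, hj, hj'⟩ := h1
  obtain ⟨l, hl, hl'⟩ := h2
  rcases lt_trichotomy j l with h | h | h
  · exact ⟨j, fun k hk => (hj k hk).trans (hl k (hk.trans h)), by rw [← hl j h]; exact hj'⟩
  · subst h; exact ⟨j, fun k hk => (hj k hk).trans (hl k hk), hj'.trans hl'⟩
  · exact ⟨l, fun k hk => (hj k (hk.trans h)).trans (hl k hk), by rw [hj l h]; exact hl'⟩

lemma lexLt_total {u v : ℕ → ℕ} (h : u ≠ v) : LexLt u v ∨ LexLt v u := by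
  classical
  have hne : ∃ j, u j ≠ v j := by
    by_contra h'; push_neg at h'; exact h (funext h')
  have h1 : ∀ k < Nat.find hne, u k = v k := fun k hk => not_not.1 (Nat.find_min hne hk)
  rcases lt_or_gt_of_ne (Nat.find_spec hne) with h2 | h2
  · exact Or.inl ⟨Nat.find hne, h1, h2⟩
  · exact Or.inr ⟨Nat.find hne, fun k hk => (h1 k hk).symm, h2⟩

lemma lexLt_asymm {u v : ℕ → ℕ} (h : LexLt u v) : ¬ LexLt v u :=
  fun h' => lexLt_irrefl u (lexLt_trans h h')


variable {M : Type*} [MetricSpace M]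

/-- Data of one stage: an index bound and two families of sets. -/
def Pack (M : Type*) := Σ k : ℕ, (Fin k → Set M) × (Fin k → Set M)

/-- The stage conditions at level `n`. -/
def GdP (s n : ℕ) (t : Pack M) : Prop :=
  (∀ i, IsOpen (t.2.2 i)) ∧ (⋃ i, t.2.2 i) = univ ∧
  (∀ i, closure (t.2.2 i) ⊆ t.2.1 i) ∧
  (∀ i, ∀ u ∈ t.2.1 i, ∀ v ∈ t.2.1 i, dist u v < 2 * (1/2 : ℝ)^n) ∧
  (∀ x : M, ({i | x ∈ t.2.1 i}).ncard ≤ s + 1)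

lemma step [CompactSpace M] {s : ℕ} (h : CovDimLE M (s : ℤ)) (n : ℕ)
    {k₀ : ℕ} (W₀ : Fin k₀ → Set M) (hW₀o : ∀ i, IsOpen (W₀ i))
    (hW₀c : (⋃ i, W₀ i) = univ) :
    ∃ t : Pack M, GdP s n t ∧ ∀ j, ∃ i, t.2.1 j ⊆ W₀ i := by
  classical
  have hr : (0 : ℝ) < (1/2 : ℝ)^n := by positivity
  have hWx : ∀ x : M, ∃ i, x ∈ W₀ i := by
    intro x
    have : x ∈ ⋃ i, W₀ i := by rw [hW₀c]; trivial
    exact mem_iUnion.1 this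
  set U : M → Set M := fun x => W₀ (hWx x).choose ∩ ball x ((1/2 : ℝ)^n) with hU
  have hUo : ∀ x, IsOpen (U x) := fun x => ((hW₀o _).inter isOpen_ball)
  have hxU : ∀ x, x ∈ U x := fun x => ⟨(hWx x).choose_spec, mem_ball_self hr⟩
  obtain ⟨t0, ht0⟩ := isCompact_univ.elim_finite_subcover U hUo
    (fun x _ => mem_iUnion.2 ⟨x, hxU x⟩)
  obtain ⟨𝒱, h𝒱fin, h𝒱o, h𝒱c, h𝒱ref, h𝒱mult⟩ := h (U '' ↑t0)
    ((t0.finite_toSet).image U)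
    (by rintro _ ⟨x, -, rfl⟩; exact hUo x)
    (by
      apply eq_univ_of_univ_subset
      intro z hz
      obtain ⟨x, hx, hzx⟩ := mem_iUnion₂.1 (ht0 hz)
      exact ⟨U x, ⟨x, hx, rfl⟩, hzx⟩)
  haveI : Fintype ↥𝒱 := h𝒱fin.fintype
  set k : ℕ := Fintype.card ↥𝒱 with hk
  set e : Fin k ≃ ↥𝒱 := (Fintype.equivFin ↥𝒱).symm with he
  set V : Fin k → Set M := fun i => ((e i : ↥𝒱) : Set M) with hV
  have hVinj : Function.Injective V := fun i j hij => e.injective (Subtype.val_injective hij)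
  have hVopen : ∀ i, IsOpen (V i) := fun i => h𝒱o _ (e i).2
  have hVcov : (⋃ i, V i) = univ := by
    apply eq_univ_of_univ_subset
    intro z hz
    have : z ∈ ⋃₀ 𝒱 := by rw [h𝒱c]; trivial
    obtain ⟨A, hA, hzA⟩ := this
    exact mem_iUnion.2 ⟨e.symm ⟨A, hA⟩, by simpa [hV] using hzA⟩
  obtain ⟨W, hWcov, hWo, hWcl⟩ := exists_iUnion_eq_closure_subset hVopen
    (fun x => Set.toFinite _) hVcov
  refine ⟨⟨k, V, W⟩, ⟨hWo, hWcov, hWcl, ?_, ?_⟩, ?_⟩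
  · -- smallness
    intro i u hu v hv
    obtain ⟨Ux, ⟨x, -, rfl⟩, hVU⟩ := h𝒱ref _ (e i).2
    have hu' : u ∈ ball x ((1/2 : ℝ)^n) := (hVU hu).2
    have hv' : v ∈ ball x ((1/2 : ℝ)^n) := (hVU hv).2
    calc dist u v ≤ dist u x + dist v x := dist_triangle_right _ _ _
      _ < 2 * (1/2 : ℝ)^n := by
          rw [mem_ball] at hu' hv'; linarith
  · -- multiplicity
    intro x
    have himg : V '' {i | x ∈ V i} = {A ∈ 𝒱 | x ∈ A} := by
      ext A
      constructor
      · rintro ⟨i, hi, rfl⟩; exact ⟨(e i).2, hi⟩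
      · rintro ⟨hA, hxA⟩
        exact ⟨e.symm ⟨A, hA⟩, by simpa [hV] using hxA, by simp [hV]⟩
    have := h𝒱mult x
    have hcard : ({i | x ∈ V i}).ncard = ({A ∈ 𝒱 | x ∈ A}).ncard := by
      rw [← himg, Set.ncard_image_of_injective _ hVinj]
    show ({i | x ∈ V i}).ncard ≤ s + 1
    rw [hcard]
    exact_mod_cast this
  · intro j
    obtain ⟨Ux, ⟨x, -, rfl⟩, hVU⟩ := h𝒱ref _ (e j).2
    exact ⟨(hWx x).choose, fun z hz => (hVU hz).1⟩


section

variable [CompactSpace M] {s : ℕ} (h : CovDimLE M (s : ℤ))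

/-- The recursively constructed sequence of stages. -/
noncomputable def seq : ∀ n : ℕ, {t : Pack M // GdP s n t} := fun n =>
  Nat.rec
    (⟨(step h 0 (fun _ : Fin 1 => univ) (fun _ => isOpen_univ) (by simp [iUnion_const])).choose,
      (step h 0 (fun _ : Fin 1 => univ) (fun _ => isOpen_univ) (by simp [iUnion_const])).choose_spec.1⟩)
    (fun n p =>
      ⟨(step h (n+1) p.1.2.2 p.2.1 p.2.2.1).choose,
       (step h (n+1) p.1.2.2 p.2.1 p.2.2.1).choose_spec.1⟩) n

noncomputable def kk (n : ℕ) : ℕ := (seq h n).1.1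
noncomputable def Vf (n : ℕ) : Fin (kk h n) → Set M := (seq h n).1.2.1
noncomputable def Wf (n : ℕ) : Fin (kk h n) → Set M := (seq h n).1.2.2

lemma Wf_cover (n : ℕ) : (⋃ i, Wf h n i) = univ := (seq h n).2.2.1
lemma clWV (n : ℕ) (i : Fin (kk h n)) : closure (Wf h n i) ⊆ Vf h n i := (seq h n).2.2.2.1 i
lemma small (n : ℕ) (i : Fin (kk h n)) :
    ∀ u ∈ Vf h n i, ∀ v ∈ Vf h n i, dist u v < 2 * (1/2 : ℝ)^n := (seq h n).2.2.2.2.1 i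
lemma mult (n : ℕ) (x : M) : ({i | x ∈ Vf h n i}).ncard ≤ s + 1 := (seq h n).2.2.2.2.2 x

lemma link (n : ℕ) : ∀ j, ∃ i, Vf h (n+1) j ⊆ Wf h n i :=
  (step h (n+1) (seq h n).1.2.2 (seq h n).2.1 (seq h n).2.2.1).choose_spec.2

noncomputable def parent (n : ℕ) (j : Fin (kk h (n+1))) : Fin (kk h n) := (link h n j).choose

lemma parent_spec (n : ℕ) (j : Fin (kk h (n+1))) :
    Vf h (n+1) j ⊆ Wf h n (parent h n j) := (link h n j).choose_spec

/-- A branch through `z`: a compatible sequence of indices whose closed sets all contain `z`. -/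
def IsBranch (z : M) (c : ∀ n, Fin (kk h n)) : Prop :=
  (∀ n, parent h n (c (n+1)) = c n) ∧ ∀ n, z ∈ closure (Wf h n (c n))

open CategoryTheory in
lemma exists_branch (z : M) : ∃ c, IsBranch h z c := by
  classical
  let S : ℕ → Type _ := fun n => {i : Fin (kk h n) // z ∈ closure (Wf h n i)}
  haveI : ∀ n, Finite (S n) := fun n => inferInstance
  haveI hne : ∀ n, Nonempty (S n) := by
    intro n
    have : z ∈ ⋃ i, Wf h n i := by rw [Wf_cover]; trivial
    obtain ⟨i, hi⟩ := mem_iUnion.1 this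
    exact ⟨⟨i, subset_closure hi⟩⟩
  let f : ∀ n, S (n+1) → S n := fun n i =>
    ⟨parent h n i.1, subset_closure (parent_spec h n i.1 (clWV h (n+1) i.1 i.2))⟩
  let F : ℕᵒᵖ ⥤ Type _ := Functor.ofOpSequence (fun n => TypeCat.ofHom (f n))
  haveI : ∀ j : ℕᵒᵖ, Finite (F.obj j) := fun j => by
    show Finite (S j.unop); infer_instance
  haveI : ∀ j : ℕᵒᵖ, Nonempty (F.obj j) := fun j => by
    show Nonempty (S j.unop); infer_instance
  obtain ⟨u, hu⟩ := nonempty_sections_of_finite_inverse_system F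
  refine ⟨fun n => (u ⟨n⟩).1, fun n => ?_, fun n => (u ⟨n⟩).2⟩
  have h4 : F.map (homOfLE (Nat.le_add_right n 1)).op (u ⟨n+1⟩) = u ⟨n⟩ := hu _
  rw [Functor.ofOpSequence_map_homOfLE_succ] at h4
  exact congrArg Subtype.val h4

noncomputable def gb (z : M) : ∀ n, Fin (kk h n) := (exists_branch h z).choose

lemma gb_compat (z : M) (n : ℕ) : parent h n (gb h z (n+1)) = gb h z n :=
  (exists_branch h z).choose_spec.1 n

lemma gb_mem (z : M) (n : ℕ) : z ∈ closure (Wf h n (gb h z n)) :=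
  (exists_branch h z).choose_spec.2 n

/-- The order function. -/
noncomputable def hfun (z : M) : ℕ → ℕ := fun n => (gb h z n : ℕ)

omit [CompactSpace M] in
lemma eq_of_dist_lt {x y : M} (hd : ∀ n : ℕ, dist x y < 2 * (1/2 : ℝ)^n) : x = y := by
  by_contra hne
  have hpos : 0 < dist x y := dist_pos.2 hne
  obtain ⟨n, hn⟩ := exists_pow_lt_of_lt_one (by positivity : (0:ℝ) < dist x y / 2)
    (by norm_num : (1/2 : ℝ) < 1)
  have := hd n
  linarith

lemma eq_of_mem_closure {x y : M} {n : ℕ} {i : Fin (kk h n)}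
    (hx : x ∈ closure (Wf h n i)) (hy : y ∈ closure (Wf h n i)) :
    dist x y < 2 * (1/2 : ℝ)^n :=
  small h n i x (clWV h n i hx) y (clWV h n i hy)

lemma hfun_inj : Function.Injective (hfun h) := by
  intro x y hxy
  refine eq_of_dist_lt (fun n => ?_)
  have hgb : gb h x n = gb h y n := Fin.val_injective (congrFun hxy n)
  exact eq_of_mem_closure h (gb_mem h x n) (hgb ▸ gb_mem h y n)

lemma ultra_const {α : Type*} [Finite α] (U : Ultrafilter ℕ) (f : ℕ → α) :
    ∃ v, {m | f m = v} ∈ U := by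
  by_contra hc
  push_neg at hc
  have h1 : ∀ v : α, {m | f m = v}ᶜ ∈ U := fun v =>
    (Ultrafilter.compl_mem_iff_notMem).2 (hc v)
  have h2 : (⋂ v : α, {m | f m = v}ᶜ) ∈ U := (Filter.iInter_mem).2 h1
  obtain ⟨m, hm⟩ := Ultrafilter.nonempty_of_mem h2
  exact (mem_iInter.1 hm (f m)) rfl

lemma snake_le (x y : M) (hxy : x ≠ y) (s' : ℕ)
    (hs' : ∀ ε : ℝ, 0 < ε →
      HasSnake (fun a b => LexLt (hfun h a) (hfun h b)) (ball x ε) (ball y ε) s') :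
    s' ≤ 2 * s + 1 := by
  classical
  by_contra hbig
  push_neg at hbig
  have hsn : ∀ m : ℕ, HasSnake (fun a b => LexLt (hfun h a) (hfun h b))
      (ball x (1/(m+1) : ℝ)) (ball y (1/(m+1) : ℝ)) s' :=
    fun m => hs' (1/(m+1)) (by positivity)
  choose a hord heven hodd using hsn
  set U := Ultrafilter.of (atTop : Filter ℕ) with hUdef
  have hUle : (U : Filter ℕ) ≤ atTop := Ultrafilter.of_le _
  have hβ : ∀ (i : Fin (s'+1)) (n : ℕ), ∃ v, {m | gb h (a m i) n = v} ∈ U :=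
    fun i n => ultra_const U _
  choose β hA using hβ
  have hUne : ∀ {A : Set ℕ}, A ∈ U → A.Nonempty := fun hA => Ultrafilter.nonempty_of_mem hA
  have βcompat : ∀ (i : Fin (s'+1)) (n : ℕ), parent h n (β i (n+1)) = β i n := by
    intro i n
    obtain ⟨m, hm1, hm2⟩ := hUne (inter_mem (hA i n) (hA i (n+1)))
    rw [← hm1, ← show gb h (a m i) (n+1) = β i (n+1) from hm2]
    exact gb_compat h (a m i) n
  set pt : Fin (s'+1) → M := fun i => if Even (i : ℕ) then x else y with hpt
  have hamem : ∀ (m : ℕ) (i : Fin (s'+1)), a m i ∈ ball (pt i) (1/(m+1) : ℝ) := by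
    intro m i
    rcases Nat.even_or_odd (i : ℕ) with hp | hp
    · have := heven m i hp
      simp only [hpt]; rw [if_pos hp]; exact this
    · have := hodd m i hp
      simp only [hpt]; rw [if_neg (by simpa [Nat.not_even_iff_odd] using hp)]; exact this
  have βmem : ∀ (i : Fin (s'+1)) (n : ℕ), pt i ∈ closure (Wf h n (β i n)) := by
    intro i n
    rw [← closure_closure, Metric.mem_closure_iff]
    intro δ hδ
    obtain ⟨m₀, hm₀⟩ := exists_nat_one_div_lt hδ
    have hge : Ici m₀ ∈ (U : Filter ℕ) := Filter.le_def.1 hUle _ (Filter.Ici_mem_atTop m₀)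
    obtain ⟨m, hmA, hmge⟩ := hUne (inter_mem (hA i n) hge)
    refine ⟨a m i, ?_, ?_⟩
    · rw [← hmA]; exact gb_mem h (a m i) n
    · have h1 := hamem m i
      rw [mem_ball] at h1
      have h2 : (1 : ℝ)/(m+1) ≤ 1/(m₀+1) := by
        apply one_div_le_one_div_of_le (by positivity)
        have : (m₀ : ℝ) ≤ m := Nat.cast_le.2 hmge
        linarith
      calc dist (pt i) (a m i) = dist (a m i) (pt i) := dist_comm _ _
        _ < 1/(m+1) := h1
        _ ≤ 1/(m₀+1) := h2
        _ < δ := hm₀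
  have noflip : ∀ i j : Fin (s'+1), i < j →
      ¬ LexLt (fun n => (β j n : ℕ)) (fun n => (β i n : ℕ)) := by
    rintro i j hij ⟨j0, hpre, hlt⟩
    have hmem : (⋂ n ∈ Finset.Iic j0,
        ({m | gb h (a m i) n = β i n} ∩ {m | gb h (a m j) n = β j n})) ∈ U := by
      refine (Filter.biInter_mem (Finset.Iic j0).finite_toSet).2 ?_
      exact fun n _ => inter_mem (hA i n) (hA j n)
    obtain ⟨m, hm⟩ := hUne hmem
    simp only [Finset.mem_coe, Finset.mem_Iic, mem_iInter, mem_inter_iff, mem_setOf_eq] at hm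
    refine lexLt_asymm (hord m i j hij) ⟨j0, ?_, ?_⟩
    · intro k hk
      have hk' : k ≤ j0 := le_of_lt hk
      show (gb h (a m j) k : ℕ) = (gb h (a m i) k : ℕ)
      rw [(hm k hk').2, (hm k hk').1]
      exact hpre k hk
    · show (gb h (a m j) j0 : ℕ) < (gb h (a m i) j0 : ℕ)
      rw [(hm j0 le_rfl).2, (hm j0 le_rfl).1]
      exact hlt
  have parity_ne : ∀ i j : Fin (s'+1), Even (i:ℕ) → ¬ Even (j:ℕ) →
      ∃ n, β i n ≠ β j n := by
    intro i j hpi hpj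
    by_contra hc; push_neg at hc
    apply hxy
    refine eq_of_dist_lt (fun n => ?_)
    have h1 : x ∈ closure (Wf h n (β i n)) := by
      have := βmem i n; simp only [hpt] at this; rwa [if_pos hpi] at this
    have h2 : y ∈ closure (Wf h n (β i n)) := by
      rw [hc n]
      have := βmem j n; simp only [hpt] at this; rwa [if_neg hpj] at this
    exact eq_of_mem_closure h h1 h2
  have evens_ne : ∀ i j : Fin (s'+1), i < j → Even (i:ℕ) → Even (j:ℕ) →
      ∃ n, β i n ≠ β j n := by
    intro i j hij hpi hpj
    by_contra hc; push_neg at hc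
    have hijn : (i:ℕ) < (j:ℕ) := hij
    have hiv : (i:ℕ) + 1 < s' + 1 := by have := j.isLt; omega
    set i1 : Fin (s'+1) := ⟨(i:ℕ)+1, hiv⟩ with hi1
    have hodd1 : ¬ Even ((i1:ℕ)) := by
      simp only [hi1, Nat.even_add_one]
      simpa using hpi
    have hne1 : (fun n => (β i n : ℕ)) ≠ (fun n => (β i1 n : ℕ)) := by
      obtain ⟨n, hn⟩ := parity_ne i i1 hpi hodd1
      intro he; exact hn (Fin.val_injective (congrFun he n))
    rcases lexLt_total hne1 with h1 | h1
    · have hij1 : i1 < j := by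
        rw [Fin.lt_def]
        show (i:ℕ)+1 < (j:ℕ)
        rcases Nat.lt_or_ge ((i:ℕ)+1) (j:ℕ) with h' | h'
        · exact h'
        · exfalso
          have hje : (i:ℕ)+1 = (j:ℕ) := le_antisymm hijn h'
          rw [← hje] at hpj
          rw [Nat.even_add_one] at hpj
          exact hpj hpi
      refine noflip i1 j hij1 ?_
      have hji : (fun n => (β j n : ℕ)) = (fun n => (β i n : ℕ)) :=
        funext fun n => congrArg _ (hc n).symm
      rw [hji]; exact h1
    · exact noflip i i1 (by rw [Fin.lt_def]; simp [hi1]) h1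
  have prop : ∀ (i j : Fin (s'+1)) (n m : ℕ), n ≤ m → β i m = β j m → β i n = β j n := by
    intro i j n m hnm
    induction m, hnm using Nat.le_induction with
    | base => exact id
    | succ m hm ih => intro he; exact ih (by rw [← βcompat i m, ← βcompat j m, he])
  have hE : ∀ p : Fin (s+2), 2 * (p:ℕ) < s' + 1 := by intro p; have := p.isLt; omega
  set E : Fin (s+2) → Fin (s'+1) := fun p => ⟨2*(p:ℕ), hE p⟩ with hEdef
  have hEeven : ∀ p, Even ((E p : ℕ)) := fun p => ⟨(p:ℕ), by simp [hEdef]; ring⟩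
  have keyne : ∀ p q : Fin (s+2), p < q → ∃ n, β (E p) n ≠ β (E q) n := by
    intro p q hpq
    refine evens_ne (E p) (E q) ?_ (hEeven p) (hEeven q)
    rw [Fin.lt_def]
    show 2*(p:ℕ) < 2*(q:ℕ)
    have : (p:ℕ) < (q:ℕ) := hpq
    omega
  have hdl : ∀ p q : Fin (s+2), ∃ n, (p < q → β (E p) n ≠ β (E q) n) := by
    intro p q
    by_cases hpq : p < q
    · obtain ⟨n, hn⟩ := keyne p q hpq; exact ⟨n, fun _ => hn⟩
    · exact ⟨0, fun hc => absurd hc hpq⟩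
  choose d hdspec using hdl
  set N : ℕ := Finset.sup Finset.univ (fun pq : Fin (s+2) × Fin (s+2) => d pq.1 pq.2) with hN
  have hdN : ∀ p q, d p q ≤ N := fun p q =>
    Finset.le_sup (f := fun pq : Fin (s+2) × Fin (s+2) => d pq.1 pq.2)
      (Finset.mem_univ (p, q))
  have ιinj : Function.Injective (fun p : Fin (s+2) => β (E p) N) := by
    intro p q he
    simp only at he
    by_contra hne
    rcases lt_or_gt_of_ne hne with hpq | hqp
    · exact hdspec p q hpq (prop _ _ _ N (hdN p q) he)
    · exact hdspec q p hqp (prop _ _ _ N (hdN q p) he.symm)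
  have hsub : ∀ p, β (E p) N ∈ {v : Fin (kk h N) | x ∈ Vf h N v} := by
    intro p
    have hb := βmem (E p) N
    simp only [hpt] at hb
    rw [if_pos (hEeven p)] at hb
    exact clWV h N _ hb
  have hfin : ({v : Fin (kk h N) | x ∈ Vf h N v}).Finite := Set.toFinite _
  have hcard : s + 2 ≤ ({v : Fin (kk h N) | x ∈ Vf h N v}).ncard := by
    have h1 : (Finset.univ : Finset (Fin (s+2))).card ≤ hfin.toFinset.card := by
      apply Finset.card_le_card_of_injOn (fun p => β (E p) N)
      · intro p _; rw [Finset.mem_coe, Set.Finite.mem_toFinset]; exact hsub p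
      · exact fun p _ q _ he => ιinj he
    rw [Set.ncard_eq_toFinset_card _ hfin]
    simpa using h1
  have := mult h N x
  omega

lemma isSTO : IsStrictTotalOrder M (fun a b => LexLt (hfun h a) (hfun h b)) where
  trichotomous := by
    intro a b hab hba
    rcases eq_or_ne a b with rfl | hne
    · rfl
    · rcases lexLt_total (fun e => hne (hfun_inj h e)) with h1 | h1
      · exact absurd h1 hab
      · exact absurd h1 hba
  irrefl := fun a => lexLt_irrefl _
  trans := fun a b c => lexLt_trans

end

end SnakeAux

/-- **Theorem B.** If `M` is a compact metric space with covering dimension at most `s`,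
then there exists a total order `T` on `M` with `Snake(M,T) ≤ 2s + 1`. -/
theorem exists_order_snake_le_of_covDim_le
    {M : Type*} [MetricSpace M] [CompactSpace M]
    (s : ℕ) (h : CovDimLE M (s : ℤ)) :
    ∃ T : M → M → Prop, IsStrictTotalOrder M T ∧
      snakeNumSpace T ≤ ((2 * s + 1 : ℕ) : ℕ∞) := by
  refine ⟨fun a b => SnakeAux.LexLt (SnakeAux.hfun h a) (SnakeAux.hfun h b),
    SnakeAux.isSTO h, ?_⟩
  rw [snakeNumSpace]
  refine iSup_le fun x => iSup_le fun y => iSup_le fun hxy => ?_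
  rw [snakeNum]
  refine iSup_le fun s' => iSup_le fun hs' => ?_
  exact Nat.cast_le.2 (SnakeAux.snake_le h x y hxy s' hs')
end

section
/- Let S¹ be the circle obtained from [0,1] by identifying 0 and 1 (equivalently, the unit circle with its intrinsic or Euclidean metric), and let T be the order induced from the natural order of (0,1) with the identified point 0 = 1 declared T-smallest. Then for distinct points x,y ∈ (0,1) one has Snake_T(x,y) = 1, while Snake_T(0,x) = 2 for every x ∈ (0,1); consequently Snake(S¹,T) = 2. -/
open Metric Set

/-- The representative in `[0,1)` of a point of the circle `ℝ/ℤ = [0,1]/(0∼1)`. -/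
noncomputable def circleRep (z : AddCircle (1 : ℝ)) : ℝ :=
  haveI : Fact ((0 : ℝ) < 1) := ⟨one_pos⟩
  (AddCircle.equivIco 1 0 z : ℝ)

/-- The order on the circle induced from the natural order of `[0,1)`, so that the
identified point `0 = 1` is the smallest element. -/
noncomputable def circleOrder (z w : AddCircle (1 : ℝ)) : Prop :=
  circleRep z < circleRep w

section Aux
local instance : Fact ((0:ℝ) < 1) := ⟨one_pos⟩

lemma circleRep_coe (x : ℝ) : circleRep (x : AddCircle (1:ℝ)) = Int.fract x := by
  simp [circleRep, AddCircle.coe_equivIco_mk_apply]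

lemma circleRep_mem (z : AddCircle (1:ℝ)) : circleRep z ∈ Set.Ico (0:ℝ) 1 := by
  have h := (AddCircle.equivIco 1 0 z).2
  simpa [circleRep] using h

lemma coe_circleRep (z : AddCircle (1:ℝ)) : ((circleRep z : ℝ) : AddCircle (1:ℝ)) = z :=
  (AddCircle.equivIco 1 0).left_inv z

lemma circleRep_zero : circleRep (0 : AddCircle (1:ℝ)) = 0 := by
  simpa using circleRep_coe 0

lemma circleRep_pos {z : AddCircle (1:ℝ)} (hz : z ≠ 0) : 0 < circleRep z := by
  rcases (circleRep_mem z).1.lt_or_eq with h | h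
  · exact h
  · exact absurd (by rw [← coe_circleRep z, ← h]; norm_num) hz

lemma circleRep_injective {z w : AddCircle (1:ℝ)} (h : circleRep z = circleRep w) : z = w := by
  rw [← coe_circleRep z, ← coe_circleRep w, h]

lemma dist_coe_coe (s t : ℝ) :
    dist ((s:AddCircle (1:ℝ))) ((t:AddCircle (1:ℝ))) = |(s - t) - round (s - t)| := by
  rw [dist_eq_norm, ← AddCircle.coe_sub, AddCircle.norm_eq]
  norm_num

/-- If `ε ≤ rep w` and `ε ≤ 1 - rep w`, points of `ball w ε` have rep `ε`-close to `rep w`. -/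
lemma rep_close {w z : AddCircle (1:ℝ)} {ε : ℝ}
    (h1 : ε ≤ circleRep w) (h2 : ε ≤ 1 - circleRep w) (hz : dist z w < ε) :
    |circleRep z - circleRep w| < ε := by
  obtain ⟨hs0, hs1⟩ := circleRep_mem z
  obtain ⟨ht0, ht1⟩ := circleRep_mem w
  set s := circleRep z
  set t := circleRep w
  have hd : |(s - t) - round (s - t)| < ε := by
    rw [← dist_coe_coe, coe_circleRep, coe_circleRep]; exact hz
  obtain ⟨ha, hb⟩ := abs_lt.mp hd
  have hn1 : ((round (s - t) : ℤ) : ℝ) < 1 := by linarith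
  have hn2 : (-1 : ℝ) < ((round (s - t) : ℤ) : ℝ) := by linarith
  have hz1 : round (s - t) < 1 := by exact_mod_cast hn1
  have hz2 : (-1 : ℤ) < round (s - t) := by exact_mod_cast hn2
  have h0 : round (s - t) = 0 := by omega
  rw [h0] at hd
  simpa using hd

/-- Points of `ball 0 ε` have rep near `0` or near `1`. -/
lemma rep_near_zero {z : AddCircle (1:ℝ)} {ε : ℝ} (hz : dist z 0 < ε) :
    circleRep z < ε ∨ 1 - ε < circleRep z := by
  obtain ⟨hs0, hs1⟩ := circleRep_mem z
  set s := circleRep z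
  have hd : |s - round s| < ε := by
    have : dist ((s : ℝ) : AddCircle (1:ℝ)) (((0:ℝ) : AddCircle (1:ℝ))) < ε := by
      rw [coe_circleRep]; simpa using hz
    rw [dist_coe_coe] at this
    simpa using this
  obtain ⟨ha, hb⟩ := abs_lt.mp hd
  have h1 : ((round s : ℤ) : ℝ) < 3/2 := by
    have := abs_sub_round s
    have := abs_le.mp this
    linarith [this.1, this.2]
  have h2 : (-(1:ℝ)) < ((round s : ℤ) : ℝ) := by
    have := abs_le.mp (abs_sub_round s)
    linarith [this.1, this.2]
  have hz1 : round s < 2 := by exact_mod_cast (by linarith : ((round s : ℤ):ℝ) < 2)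
  have hz2 : (-1 : ℤ) < round s := by exact_mod_cast h2
  interval_cases h : round s
  · left; push_cast at hb; linarith
  · right; push_cast at ha; linarith

lemma dist_one_sub_zero {δ : ℝ} (h0 : 0 < δ) (h1 : δ ≤ 1/2) :
    dist (((1 - δ : ℝ)) : AddCircle (1:ℝ)) 0 = δ := by
  have : dist (((1 - δ : ℝ)) : AddCircle (1:ℝ)) (((0:ℝ)) : AddCircle (1:ℝ)) = δ := by
    rw [dist_coe_coe]
    have hr : round (1 - δ - 0) = 1 := by
      have h15 : (1:ℝ) ≤ 1 - δ - 0 + 1/2 := by linarith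
      have h25 : 1 - δ - 0 + 1/2 < 2 := by linarith
      rw [round_eq, Int.floor_eq_iff]
      push_cast
      constructor <;> linarith
    rw [hr]
    push_cast
    rw [abs_of_nonpos (by linarith)]
    ring
  simpa using this

/-- `1 - δ` as a point of the circle, useful witness near `0` from below. -/
lemma one_sub_mem_ball_zero {δ ε : ℝ} (h0 : 0 < δ) (h1 : δ ≤ 1/2) (h2 : δ < ε) :
    (((1 - δ : ℝ)) : AddCircle (1:ℝ)) ∈ ball (0 : AddCircle (1:ℝ)) ε := by
  rw [mem_ball, dist_one_sub_zero h0 h1]; exact h2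

lemma circleRep_one_sub {δ : ℝ} (h0 : 0 < δ) (h1 : δ ≤ 1) :
    circleRep (((1 - δ : ℝ)) : AddCircle (1:ℝ)) = 1 - δ := by
  rw [circleRep_coe, Int.fract_eq_self.mpr ⟨by linarith, by linarith⟩]

end Aux


section Snakes

lemma hasSnake_zero {M : Type*} (T : M → M → Prop) {U V : Set M} {u : M} (hu : u ∈ U) :
    HasSnake T U V 0 := by
  refine ⟨fun _ => u, ?_, fun _ _ => hu, ?_⟩
  · intro i j hij
    rw [Fin.lt_def] at hij
    omega
  · intro i hi
    have := i.isLt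
    rw [Nat.odd_iff] at hi
    omega

lemma hasSnake_one {M : Type*} {T : M → M → Prop} {U V : Set M} {u v : M}
    (hu : u ∈ U) (hv : v ∈ V) (huv : T u v) : HasSnake T U V 1 := by
  refine ⟨fun i => if (i : ℕ) = 0 then u else v, ?_, ?_, ?_⟩
  · intro i j hij
    have hi := i.isLt; have hj := j.isLt
    rw [Fin.lt_def] at hij
    have h : (i : ℕ) = 0 ∧ (j : ℕ) = 1 := by omega
    simp [h.1, h.2, huv]
  · intro i hi
    have := i.isLt
    rw [Nat.even_iff] at hi
    have h : (i : ℕ) = 0 := by omega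
    simp [h, hu]
  · intro i hi
    have := i.isLt
    rw [Nat.odd_iff] at hi
    have h : (i : ℕ) = 1 := by omega
    simp [h, hv]

lemma hasSnake_two {M : Type*} {T : M → M → Prop} {U V : Set M} {u v w : M}
    (hu : u ∈ U) (hv : v ∈ V) (hw : w ∈ U)
    (huv : T u v) (hvw : T v w) (huw : T u w) : HasSnake T U V 2 := by
  refine ⟨fun i => if (i : ℕ) = 0 then u else if (i : ℕ) = 1 then v else w, ?_, ?_, ?_⟩
  · intro i j hij
    have hi := i.isLt; have hj := j.isLt
    rw [Fin.lt_def] at hij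
    have h : ((i : ℕ) = 0 ∧ (j : ℕ) = 1) ∨ ((i : ℕ) = 0 ∧ (j : ℕ) = 2) ∨
        ((i : ℕ) = 1 ∧ (j : ℕ) = 2) := by omega
    rcases h with ⟨h1, h2⟩ | ⟨h1, h2⟩ | ⟨h1, h2⟩ <;> simp [h1, h2, huv, hvw, huw]
  · intro i hi
    have := i.isLt
    rw [Nat.even_iff] at hi
    have h : (i : ℕ) = 0 ∨ (i : ℕ) = 2 := by omega
    rcases h with h | h <;> simp [h, hu, hw]
  · intro i hi
    have := i.isLt
    rw [Nat.odd_iff] at hi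
    have h : (i : ℕ) = 1 := by omega
    simp [h, hv]

end Snakes


lemma snakeNum_eq_of {x y : AddCircle (1:ℝ)} {n : ℕ}
    (hmem : ∀ ε : ℝ, 0 < ε → HasSnake circleOrder (ball x ε) (ball y ε) n)
    (hub : ∀ s : ℕ, (∀ ε : ℝ, 0 < ε → HasSnake circleOrder (ball x ε) (ball y ε) s) → s ≤ n) :
    snakeNum circleOrder x y = (n : ℕ∞) := by
  apply le_antisymm
  · refine iSup₂_le fun s hs => ?_
    exact_mod_cast Nat.cast_le.mpr (hub s hs)
  · exact le_iSup₂ (f := fun (s : ℕ) (_ : s ∈ {s : ℕ | ∀ ε : ℝ, 0 < ε →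
      HasSnake circleOrder (ball x ε) (ball y ε) s}) => (s : ℕ∞)) n hmem

lemma snakeNum_xy {x y : AddCircle (1:ℝ)} (hx : x ≠ 0) (hy : y ≠ 0)
    (hlt : circleRep x < circleRep y) : snakeNum circleOrder x y = 1 := by
  have hx0 := circleRep_pos hx
  have hy1 := (circleRep_mem y).2
  have h : snakeNum circleOrder x y = ((1:ℕ) : ℕ∞) := by
    apply snakeNum_eq_of
    · intro ε hε
      exact hasSnake_one (mem_ball_self hε) (mem_ball_self hε) hlt
    · intro s hs
      by_contra hcon
      push_neg at hcon
      set ε := min (min (circleRep x) (1 - circleRep y)) ((circleRep y - circleRep x)/2) with hεdef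
      have hε : 0 < ε := lt_min (lt_min hx0 (by linarith)) (by linarith)
      have hεx : ε ≤ circleRep x := le_trans (min_le_left _ _) (min_le_left _ _)
      have hεy' : ε ≤ 1 - circleRep y := le_trans (min_le_left _ _) (min_le_right _ _)
      have hεh : ε ≤ (circleRep y - circleRep x)/2 := min_le_right _ _
      have hεx' : ε ≤ 1 - circleRep x := by linarith
      have hεy : ε ≤ circleRep y := by linarith
      obtain ⟨a, hT, hU, hV⟩ := hs ε hε
      have e1 : |circleRep (a ⟨1, by omega⟩) - circleRep y| < ε :=
        rep_close hεy hεy' (mem_ball.mp (hV ⟨1, by omega⟩ ⟨0, rfl⟩))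
      have e2 : |circleRep (a ⟨2, by omega⟩) - circleRep x| < ε :=
        rep_close hεx hεx' (mem_ball.mp (hU ⟨2, by omega⟩ ⟨1, rfl⟩))
      have h12 : circleRep (a ⟨1, by omega⟩) < circleRep (a ⟨2, by omega⟩) :=
        hT ⟨1, by omega⟩ ⟨2, by omega⟩ (Fin.mk_lt_mk.mpr (by omega))
      obtain ⟨e1a, e1b⟩ := abs_lt.mp e1
      obtain ⟨e2a, e2b⟩ := abs_lt.mp e2
      linarith
  simpa using h

lemma snakeNum_yx {x y : AddCircle (1:ℝ)} (hx : x ≠ 0) (hy : y ≠ 0)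
    (hlt : circleRep x < circleRep y) : snakeNum circleOrder y x = 0 := by
  have hx0 := circleRep_pos hx
  have hy1 := (circleRep_mem y).2
  have h : snakeNum circleOrder y x = ((0:ℕ) : ℕ∞) := by
    apply snakeNum_eq_of
    · intro ε hε
      exact hasSnake_zero circleOrder (mem_ball_self hε)
    · intro s hs
      by_contra hcon
      push_neg at hcon
      set ε := min (min (circleRep x) (1 - circleRep y)) ((circleRep y - circleRep x)/2) with hεdef
      have hε : 0 < ε := lt_min (lt_min hx0 (by linarith)) (by linarith)
      have hεx : ε ≤ circleRep x := le_trans (min_le_left _ _) (min_le_left _ _)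
      have hεy' : ε ≤ 1 - circleRep y := le_trans (min_le_left _ _) (min_le_right _ _)
      have hεh : ε ≤ (circleRep y - circleRep x)/2 := min_le_right _ _
      have hεx' : ε ≤ 1 - circleRep x := by linarith
      have hεy : ε ≤ circleRep y := by linarith
      obtain ⟨a, hT, hU, hV⟩ := hs ε hε
      have e0 : |circleRep (a ⟨0, by omega⟩) - circleRep y| < ε :=
        rep_close hεy hεy' (mem_ball.mp (hU ⟨0, by omega⟩ ⟨0, rfl⟩))
      have e1 : |circleRep (a ⟨1, by omega⟩) - circleRep x| < ε :=
        rep_close hεx hεx' (mem_ball.mp (hV ⟨1, by omega⟩ ⟨0, rfl⟩))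
      have h01 : circleRep (a ⟨0, by omega⟩) < circleRep (a ⟨1, by omega⟩) :=
        hT ⟨0, by omega⟩ ⟨1, by omega⟩ (Fin.mk_lt_mk.mpr (by omega))
      obtain ⟨e0a, e0b⟩ := abs_lt.mp e0
      obtain ⟨e1a, e1b⟩ := abs_lt.mp e1
      linarith
  simpa using h

lemma snakeNum_zero_x {x : AddCircle (1:ℝ)} (hx : x ≠ 0) :
    snakeNum circleOrder 0 x = 2 := by
  have hx0 := circleRep_pos hx
  have hx1 := (circleRep_mem x).2
  have h : snakeNum circleOrder 0 x = ((2:ℕ) : ℕ∞) := by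
    apply snakeNum_eq_of
    · intro ε hε
      set δ := min (ε/2) ((1 - circleRep x)/2) with hδdef
      have hδ0 : 0 < δ := lt_min (by linarith) (by linarith)
      have hδa : δ ≤ ε/2 := min_le_left _ _
      have hδb : δ ≤ (1 - circleRep x)/2 := min_le_right _ _
      have hδhalf : δ ≤ 1/2 := by linarith
      have hrep : circleRep (((1 - δ : ℝ)) : AddCircle (1:ℝ)) = 1 - δ :=
        circleRep_one_sub hδ0 (by linarith)
      refine hasSnake_two (mem_ball_self hε) (mem_ball_self hε)
        (one_sub_mem_ball_zero hδ0 hδhalf (by linarith)) ?_ ?_ ?_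
      · show circleRep 0 < circleRep x
        rw [circleRep_zero]; exact hx0
      · show circleRep x < circleRep _
        rw [hrep]; linarith
      · show circleRep 0 < circleRep _
        rw [circleRep_zero, hrep]; linarith
    · intro s hs
      by_contra hcon
      push_neg at hcon
      set ε := min (circleRep x / 2) ((1 - circleRep x)/2) with hεdef
      have hε : 0 < ε := lt_min (by linarith) (by linarith)
      have hεa : ε ≤ circleRep x / 2 := min_le_left _ _
      have hεb : ε ≤ (1 - circleRep x)/2 := min_le_right _ _
      obtain ⟨a, hT, hU, hV⟩ := hs ε hε
      have e1 : |circleRep (a ⟨1, by omega⟩) - circleRep x| < ε :=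
        rep_close (by linarith) (by linarith) (mem_ball.mp (hV ⟨1, by omega⟩ ⟨0, rfl⟩))
      have e3 : |circleRep (a ⟨3, by omega⟩) - circleRep x| < ε :=
        rep_close (by linarith) (by linarith) (mem_ball.mp (hV ⟨3, by omega⟩ ⟨1, rfl⟩))
      have e2 : circleRep (a ⟨2, by omega⟩) < ε ∨ 1 - ε < circleRep (a ⟨2, by omega⟩) :=
        rep_near_zero (mem_ball.mp (hU ⟨2, by omega⟩ ⟨1, rfl⟩))
      have h12 : circleRep (a ⟨1, by omega⟩) < circleRep (a ⟨2, by omega⟩) :=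
        hT ⟨1, by omega⟩ ⟨2, by omega⟩ (Fin.mk_lt_mk.mpr (by omega))
      have h23 : circleRep (a ⟨2, by omega⟩) < circleRep (a ⟨3, by omega⟩) :=
        hT ⟨2, by omega⟩ ⟨3, by omega⟩ (Fin.mk_lt_mk.mpr (by omega))
      obtain ⟨e1a, e1b⟩ := abs_lt.mp e1
      obtain ⟨e3a, e3b⟩ := abs_lt.mp e3
      rcases e2 with h | h
      · linarith
      · linarith
  simpa using h

lemma snakeNum_x_zero {x : AddCircle (1:ℝ)} (hx : x ≠ 0) :
    snakeNum circleOrder x 0 = 1 := by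
  have hx0 := circleRep_pos hx
  have hx1 := (circleRep_mem x).2
  have h : snakeNum circleOrder x 0 = ((1:ℕ) : ℕ∞) := by
    apply snakeNum_eq_of
    · intro ε hε
      set δ := min (ε/2) ((1 - circleRep x)/2) with hδdef
      have hδ0 : 0 < δ := lt_min (by linarith) (by linarith)
      have hδa : δ ≤ ε/2 := min_le_left _ _
      have hδb : δ ≤ (1 - circleRep x)/2 := min_le_right _ _
      have hδhalf : δ ≤ 1/2 := by linarith
      have hrep : circleRep (((1 - δ : ℝ)) : AddCircle (1:ℝ)) = 1 - δ :=
        circleRep_one_sub hδ0 (by linarith)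
      refine hasSnake_one (mem_ball_self hε)
        (one_sub_mem_ball_zero hδ0 hδhalf (by linarith)) ?_
      show circleRep x < circleRep _
      rw [hrep]; linarith
    · intro s hs
      by_contra hcon
      push_neg at hcon
      set ε := min (circleRep x / 2) ((1 - circleRep x)/2) with hεdef
      have hε : 0 < ε := lt_min (by linarith) (by linarith)
      have hεa : ε ≤ circleRep x / 2 := min_le_left _ _
      have hεb : ε ≤ (1 - circleRep x)/2 := min_le_right _ _
      obtain ⟨a, hT, hU, hV⟩ := hs ε hε
      have e0 : |circleRep (a ⟨0, by omega⟩) - circleRep x| < ε :=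
        rep_close (by linarith) (by linarith) (mem_ball.mp (hU ⟨0, by omega⟩ ⟨0, rfl⟩))
      have e2 : |circleRep (a ⟨2, by omega⟩) - circleRep x| < ε :=
        rep_close (by linarith) (by linarith) (mem_ball.mp (hU ⟨2, by omega⟩ ⟨1, rfl⟩))
      have e1 : circleRep (a ⟨1, by omega⟩) < ε ∨ 1 - ε < circleRep (a ⟨1, by omega⟩) :=
        rep_near_zero (mem_ball.mp (hV ⟨1, by omega⟩ ⟨0, rfl⟩))
      have h01 : circleRep (a ⟨0, by omega⟩) < circleRep (a ⟨1, by omega⟩) :=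
        hT ⟨0, by omega⟩ ⟨1, by omega⟩ (Fin.mk_lt_mk.mpr (by omega))
      have h12 : circleRep (a ⟨1, by omega⟩) < circleRep (a ⟨2, by omega⟩) :=
        hT ⟨1, by omega⟩ ⟨2, by omega⟩ (Fin.mk_lt_mk.mpr (by omega))
      obtain ⟨e0a, e0b⟩ := abs_lt.mp e0
      obtain ⟨e2a, e2b⟩ := abs_lt.mp e2
      rcases e1 with h | h
      · linarith
      · linarith
  simpa using h

/-- **Example 2.** On the circle obtained from `[0,1]` by identifying `0` and `1`,
with the order induced from `(0,1)` and the identified point declared smallest: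
distinct points of `(0,1)` have snake number `1`, the pair `(0, x)` has snake
number `2`, and consequently `Snake(S¹, T) = 2`. -/
theorem snake_circle_glued_order :
    (∀ x y : AddCircle (1 : ℝ), x ≠ 0 → y ≠ 0 → x ≠ y →
      max (snakeNum circleOrder x y) (snakeNum circleOrder y x) = 1) ∧
    (∀ x : AddCircle (1 : ℝ), x ≠ 0 →
      max (snakeNum circleOrder 0 x) (snakeNum circleOrder x 0) = 2) ∧
    snakeNumSpace circleOrder = 2 := by
  have key1 : ∀ x y : AddCircle (1 : ℝ), x ≠ 0 → y ≠ 0 → x ≠ y →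
      max (snakeNum circleOrder x y) (snakeNum circleOrder y x) = 1 := by
    intro x y hx hy hxy
    rcases lt_trichotomy (circleRep x) (circleRep y) with h | h | h
    · rw [snakeNum_xy hx hy h, snakeNum_yx hx hy h]
      exact max_eq_left zero_le_one
    · exact absurd (circleRep_injective h) hxy
    · rw [snakeNum_xy hy hx h, snakeNum_yx hy hx h]
      exact max_eq_right zero_le_one
  have key2 : ∀ x : AddCircle (1 : ℝ), x ≠ 0 →
      max (snakeNum circleOrder 0 x) (snakeNum circleOrder x 0) = 2 := by
    intro x hx
    rw [snakeNum_zero_x hx, snakeNum_x_zero hx]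
    exact max_eq_left one_le_two
  refine ⟨key1, key2, ?_⟩
  have hhalf : (((1/2 : ℝ)) : AddCircle (1:ℝ)) ≠ 0 := by
    intro h
    have h1 : circleRep (((1/2 : ℝ)) : AddCircle (1:ℝ)) = Int.fract (1/2 : ℝ) :=
      circleRep_coe _
    rw [h, circleRep_zero, Int.fract_eq_self.mpr ⟨by norm_num, by norm_num⟩] at h1
    norm_num at h1
  apply le_antisymm
  · refine iSup_le fun x => iSup_le fun y => iSup_le fun hxy => ?_
    by_cases hx : x = 0
    · subst hx
      rw [snakeNum_zero_x (Ne.symm hxy)]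
    · by_cases hy : y = 0
      · subst hy
        rw [snakeNum_x_zero hx]
        norm_num
      · rcases lt_trichotomy (circleRep x) (circleRep y) with h | h | h
        · rw [snakeNum_xy hx hy h]; norm_num
        · exact absurd (circleRep_injective h) hxy
        · rw [snakeNum_yx hy hx h]; norm_num
  · have h2 : (2 : ℕ∞) = snakeNum circleOrder 0 (((1/2 : ℝ)) : AddCircle (1:ℝ)) :=
      (snakeNum_zero_x hhalf).symm
    rw [h2]
    calc snakeNum circleOrder 0 (((1/2 : ℝ)) : AddCircle (1:ℝ))
        ≤ ⨆ (_ : (0 : AddCircle (1:ℝ)) ≠ (((1/2 : ℝ)) : AddCircle (1:ℝ))),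
            snakeNum circleOrder 0 (((1/2 : ℝ)) : AddCircle (1:ℝ)) :=
          le_iSup (fun _ => snakeNum circleOrder 0 _) (Ne.symm hhalf)
      _ ≤ ⨆ (y : AddCircle (1:ℝ)) (_ : (0 : AddCircle (1:ℝ)) ≠ y),
            snakeNum circleOrder 0 y :=
          le_iSup (fun y => ⨆ (_ : (0 : AddCircle (1:ℝ)) ≠ y), snakeNum circleOrder 0 y)
            (((1/2 : ℝ)) : AddCircle (1:ℝ))
      _ ≤ snakeNumSpace circleOrder :=
          le_iSup (fun x => ⨆ (y : AddCircle (1:ℝ)) (_ : x ≠ y), snakeNum circleOrder x y) 0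
end

section
/- For every total order T' on the circle S¹ (the unit circle in ℝ² with its Euclidean metric), the snake number satisfies Snake(S¹,T') ≥ 2; in fact there exists a pair of antipodal points x, A(x) with Snake_{T'}(x, A(x)) ≥ 2. -/
open Metric Set

/-- The antipodal point `A(x) = -x` of a point of the unit circle in `ℝ²`. -/
def antipode (x : Metric.sphere (0 : EuclideanSpace ℝ (Fin 2)) 1) :
    Metric.sphere (0 : EuclideanSpace ℝ (Fin 2)) 1 :=
  ⟨-(x : EuclideanSpace ℝ (Fin 2)), by
    have hx := x.2
    simp only [mem_sphere_zero_iff_norm, norm_neg] at hx ⊢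
    exact hx⟩

section MyAux

lemma hasSnake_mono' {M : Type*} {T : M → M → Prop} {U₁ U₂ V₁ V₂ : Set M} {s : ℕ}
    (h1 : U₁ ⊆ V₁) (h2 : U₂ ⊆ V₂) (h : HasSnake T U₁ U₂ s) : HasSnake T V₁ V₂ s := by
  obtain ⟨a, ha, he, ho⟩ := h
  exact ⟨a, ha, fun i hi => h1 (he i hi), fun i hi => h2 (ho i hi)⟩

lemma hasSnake_two' {M : Type*} (T : M → M → Prop) {U₁ U₂ : Set M} {p q r : M}
    (hpq : T p q) (hqr : T q r) (hpr : T p r)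
    (hp : p ∈ U₁) (hq : q ∈ U₂) (hr : r ∈ U₁) : HasSnake T U₁ U₂ 2 := by
  refine ⟨![p, q, r], ?_, ?_, ?_⟩
  · intro i j hij
    fin_cases i <;> fin_cases j <;> simp_all [Fin.lt_def]
  · intro i hi
    fin_cases i <;> simp_all [Nat.even_iff, Nat.odd_iff]
  · intro i hi
    fin_cases i <;> simp_all [Nat.even_iff, Nat.odd_iff]

local notation "S¹" => Metric.sphere (0 : EuclideanSpace ℝ (Fin 2)) 1

lemma antipode_antipode' (x : S¹) : antipode (antipode x) = x :=
  Subtype.ext (neg_neg _)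

lemma dist_antipode' (x y : S¹) : dist (antipode x) (antipode y) = dist x y := by
  rw [Subtype.dist_eq, Subtype.dist_eq]
  exact dist_neg_neg _ _

lemma dist_self_antipode' (x : S¹) : dist x (antipode x) = 2 := by
  have hx : ‖(x : EuclideanSpace ℝ (Fin 2))‖ = 1 := mem_sphere_zero_iff_norm.mp x.2
  rw [Subtype.dist_eq]
  show dist (x : EuclideanSpace ℝ (Fin 2)) (-(x : EuclideanSpace ℝ (Fin 2))) = 2
  rw [dist_eq_norm, sub_neg_eq_add, ← two_smul ℝ, norm_smul]
  simp [hx]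

lemma antipode_ne' (x : S¹) : x ≠ antipode x := by
  intro h
  have h2 := dist_self_antipode' x
  rw [← h, dist_self] at h2
  norm_num at h2

lemma balls_ne' {x : S¹} {ε : ℝ} (hε : ε ≤ 1) {a b : S¹}
    (ha : a ∈ ball x ε) (hb : b ∈ ball (antipode x) ε) : a ≠ b := by
  intro h
  subst h
  have h1 : dist a x < ε := mem_ball.mp ha
  have h2 : dist a (antipode x) < ε := mem_ball.mp hb
  have h3 := dist_self_antipode' x
  have h4 := dist_triangle x a (antipode x)
  rw [dist_comm] at h1
  linarith

end MyAux

/-- **Proposition.** For every total order `T'` on the unit circle `S¹ ⊆ ℝ²`, there is a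
pair of antipodal points `x, A(x)` with `Snake_{T'}(x, A(x)) ≥ 2`; in particular
`Snake(S¹, T') ≥ 2`. -/
theorem snake_circle_ge_two_of_anyOrder
    (T : Metric.sphere (0 : EuclideanSpace ℝ (Fin 2)) 1 →
         Metric.sphere (0 : EuclideanSpace ℝ (Fin 2)) 1 → Prop)
    (hT : IsStrictTotalOrder _ T) :
    (∃ x, 2 ≤ snakeNum T x (antipode x)) ∧ 2 ≤ snakeNumSpace T := by
  haveI := hT
  set E := EuclideanSpace ℝ (Fin 2)
  -- connectedness of the circle
  have hrank : 1 < Module.rank ℝ E := by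
    have h2 : Module.finrank ℝ E = 2 := finrank_euclideanSpace_fin
    rw [← Module.finrank_eq_rank, h2]
    exact_mod_cast one_lt_two
  haveI : PreconnectedSpace (Metric.sphere (0 : E) 1) :=
    Subtype.preconnectedSpace (isConnected_sphere hrank 0 (by norm_num)).isPreconnected
  have key : ∃ x, ∀ ε : ℝ, 0 < ε → HasSnake T (ball x ε) (ball (antipode x) ε) 2 := by
    by_contra hcon
    push_neg at hcon
    -- dichotomy
    have dich : ∀ x, ∃ ε, 0 < ε ∧
        ((∀ a ∈ ball x ε, ∀ b ∈ ball (antipode x) ε, T a b) ∨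
         (∀ a ∈ ball x ε, ∀ b ∈ ball (antipode x) ε, T b a)) := by
      intro x
      obtain ⟨ε₁, hε₁, h1⟩ := hcon x
      obtain ⟨ε₂, hε₂, h2⟩ := hcon (antipode x)
      rw [antipode_antipode'] at h2
      set ε := min (min ε₁ ε₂) 1 with hεdef
      have hεpos : 0 < ε := by positivity
      have hεle1 : ε ≤ 1 := min_le_right _ _
      have hεle1' : ε ≤ ε₁ := le_trans (min_le_left _ _) (min_le_left _ _)
      have hεle2' : ε ≤ ε₂ := le_trans (min_le_left _ _) (min_le_right _ _)
      have h1' : ¬ HasSnake T (ball x ε) (ball (antipode x) ε) 2 := fun h =>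
        h1 (hasSnake_mono' (ball_subset_ball hεle1') (ball_subset_ball hεle1') h)
      have h2' : ¬ HasSnake T (ball (antipode x) ε) (ball x ε) 2 := fun h =>
        h2 (hasSnake_mono' (ball_subset_ball hεle2') (ball_subset_ball hεle2') h)
      refine ⟨ε, hεpos, ?_⟩
      by_contra hc
      push_neg at hc
      obtain ⟨⟨a₁, ha₁, b₁, hb₁, hT1⟩, ⟨a₂, ha₂, b₂, hb₂, hT2⟩⟩ := hc
      have hne1 : a₁ ≠ b₁ := balls_ne' hεle1 ha₁ hb₁
      have hne2 : a₂ ≠ b₂ := balls_ne' hεle1 ha₂ hb₂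
      have hb₁a₁ : T b₁ a₁ := by
        rcases trichotomous_of T a₁ b₁ with h | h | h
        · exact absurd h hT1
        · exact absurd h hne1
        · exact h
      have ha₂b₂ : T a₂ b₂ := by
        rcases trichotomous_of T a₂ b₂ with h | h | h
        · exact h
        · exact absurd h hne2
        · exact absurd h hT2
      rcases trichotomous_of T a₁ b₂ with h | h | h
      · exact h2' (hasSnake_two' T hb₁a₁ h (trans_of T hb₁a₁ h) hb₁ ha₁ hb₂)
      · exact absurd h.symm (balls_ne' hεle1 ha₁ hb₂).symm
      · exact h1' (hasSnake_two' T ha₂b₂ h (trans_of T ha₂b₂ h) ha₂ hb₂ ha₁)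
    set U : Set (Metric.sphere (0 : E) 1) :=
      {x | ∃ ε, 0 < ε ∧ ∀ a ∈ ball x ε, ∀ b ∈ ball (antipode x) ε, T a b} with hU
    set V : Set (Metric.sphere (0 : E) 1) :=
      {x | ∃ ε, 0 < ε ∧ ∀ a ∈ ball x ε, ∀ b ∈ ball (antipode x) ε, T b a} with hV
    have hsub : ∀ (x y : Metric.sphere (0 : E) 1) (ε : ℝ), dist y x < ε / 2 →
        ball y (ε / 2) ⊆ ball x ε ∧ ball (antipode y) (ε / 2) ⊆ ball (antipode x) ε := by
      intro x y ε hy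
      constructor
      · exact ball_subset_ball' (by linarith [dist_comm y x ▸ hy])
      · refine ball_subset_ball' ?_
        rw [dist_antipode']
        linarith
    have hUopen : IsOpen U := by
      rw [Metric.isOpen_iff]
      rintro x ⟨ε, hε, hx⟩
      refine ⟨ε / 2, by positivity, fun y hy => ?_⟩
      obtain ⟨hs1, hs2⟩ := hsub x y ε (mem_ball.mp hy)
      exact ⟨ε / 2, by positivity, fun a ha b hb => hx a (hs1 ha) b (hs2 hb)⟩
    have hVopen : IsOpen V := by
      rw [Metric.isOpen_iff]
      rintro x ⟨ε, hε, hx⟩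
      refine ⟨ε / 2, by positivity, fun y hy => ?_⟩
      obtain ⟨hs1, hs2⟩ := hsub x y ε (mem_ball.mp hy)
      exact ⟨ε / 2, by positivity, fun a ha b hb => hx a (hs1 ha) b (hs2 hb)⟩
    have hdisj : ∀ x, x ∈ U → x ∈ V → False := by
      rintro x ⟨ε₁, hε₁, h₁⟩ ⟨ε₂, hε₂, h₂⟩
      have hm1 : x ∈ ball x (min ε₁ ε₂) := mem_ball_self (lt_min hε₁ hε₂)
      have hm2 : antipode x ∈ ball (antipode x) (min ε₁ ε₂) := mem_ball_self (lt_min hε₁ hε₂)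
      have t1 : T x (antipode x) :=
        h₁ x (ball_subset_ball (min_le_left _ _) hm1) _ (ball_subset_ball (min_le_left _ _) hm2)
      have t2 : T (antipode x) x :=
        h₂ x (ball_subset_ball (min_le_right _ _) hm1) _ (ball_subset_ball (min_le_right _ _) hm2)
      exact irrefl_of T x (trans_of T t1 t2)
    have hcover : U ∪ V = univ := by
      ext x
      simp only [mem_union, mem_univ, iff_true]
      obtain ⟨ε, hε, hd⟩ := dich x
      rcases hd with h | h
      · exact Or.inl ⟨ε, hε, h⟩
      · exact Or.inr ⟨ε, hε, h⟩
    -- antipodal swap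
    have hswapU : ∀ x, x ∈ U → antipode x ∈ V := by
      rintro x ⟨ε, hε, h⟩
      refine ⟨ε, hε, fun a ha b hb => ?_⟩
      rw [antipode_antipode'] at hb
      exact h b hb a ha
    have hswapV : ∀ x, x ∈ V → antipode x ∈ U := by
      rintro x ⟨ε, hε, h⟩
      refine ⟨ε, hε, fun a ha b hb => ?_⟩
      rw [antipode_antipode'] at hb
      exact h b hb a ha
    have hVcompl : V = Uᶜ := by
      ext x
      constructor
      · intro hx hx'
        exact hdisj x hx' hx
      · intro hx
        have := hcover ▸ mem_univ x
        rcases (hcover.symm ▸ mem_univ x : x ∈ U ∪ V) with h | h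
        · exact absurd h hx
        · exact h
    have hclopen : IsClopen U := ⟨by rw [← isOpen_compl_iff, ← hVcompl]; exact hVopen, hUopen⟩
    obtain ⟨p₀, hp₀⟩ : (Metric.sphere (0 : E) 1).Nonempty :=
      NormedSpace.sphere_nonempty.mpr (by norm_num : (0:ℝ) ≤ 1)
    set p : Metric.sphere (0 : E) 1 := ⟨p₀, hp₀⟩
    rcases isClopen_iff.mp hclopen with h | h
    · -- U empty: every point in V; but swap puts antipodes in U
      have hx : p ∈ U ∪ V := hcover ▸ mem_univ _
      rcases hx with hx | hx
      · rw [h] at hx; exact hx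
      · have := hswapV _ hx
        rw [h] at this; exact this
    · -- U = univ
      have hx : p ∈ U := h ▸ mem_univ _
      have h1 := hswapU _ hx
      have h2 : antipode p ∈ U := h ▸ mem_univ _
      exact hdisj _ h2 h1
  obtain ⟨x, hx⟩ := key
  have h2 : (2 : ℕ∞) ≤ snakeNum T x (antipode x) := by
    have := le_biSup (fun s : ℕ => (s : ℕ∞))
      (show 2 ∈ {s : ℕ | ∀ ε : ℝ, 0 < ε → HasSnake T (ball x ε) (ball (antipode x) ε) s} from hx)
    simpa [snakeNum] using this
  refine ⟨⟨x, h2⟩, ?_⟩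
  calc (2 : ℕ∞) ≤ snakeNum T x (antipode x) := h2
    _ ≤ ⨆ (_ : x ≠ antipode x), snakeNum T x (antipode x) := le_iSup (fun _ : x ≠ antipode x => snakeNum T x (antipode x)) (antipode_ne' x)
    _ ≤ ⨆ (y : Metric.sphere (0 : E) 1) (_ : x ≠ y), snakeNum T x y :=
        le_iSup (fun y => ⨆ (_ : x ≠ y), snakeNum T x y) (antipode x)
    _ ≤ snakeNumSpace T :=
        le_iSup (fun z : Metric.sphere (0 : E) 1 => ⨆ (y) (_ : z ≠ y), snakeNum T z y) x
end

section
/- Let (M,T) be an ordered metric space with Snake(M,T) ≤ n. Suppose M is the disjoint union M = A ⊔ B of two sets such that x₁ <_T x₂ for all x₁ ∈ A and x₂ ∈ B. Then there exists a total order T' on the topological boundary ∂A of A such that Snake(∂A, T') ≤ n − 1, where ∂A is regarded as a metric space with the metric induced from M. -/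
open Metric Set

/-- **Lemma 1.** If `(M, T)` is an ordered metric space with `Snake(M,T) ≤ n`, and
`M = A ⊔ B` with every point of `A` being `T`-smaller than every point of `B`, then
the boundary `∂A` (with the induced metric) admits a total order `T'` with
`Snake(∂A, T') ≤ n - 1`. -/
theorem exists_order_on_frontier_snake_le
    {M : Type*} [MetricSpace M]
    (T : M → M → Prop) (hT : IsStrictTotalOrder M T)
    (n : ℕ) (h : snakeNumSpace T ≤ (n : ℕ∞))
    (A B : Set M) (hdisj : Disjoint A B) (hunion : A ∪ B = Set.univ)
    (hord : ∀ x₁ ∈ A, ∀ x₂ ∈ B, T x₁ x₂) :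
    ∃ T' : frontier A → frontier A → Prop, IsStrictTotalOrder (frontier A) T' ∧
      snakeNumSpace T' ≤ (n : ℕ∞) - 1 := by
  classical
  have hclA : ∀ u : frontier A, (u : M) ∈ closure A := fun u => frontier_subset_closure u.2
  have hclB : ∀ u : frontier A, (u : M) ∈ closure B := by
    intro u
    have h2 : (u : M) ∈ frontier Aᶜ := by rw [frontier_compl]; exact u.2
    have h3 : (u : M) ∈ closure Aᶜ := frontier_subset_closure h2
    have hBA : Aᶜ ⊆ B := by
      intro z hz
      have : z ∈ A ∪ B := hunion ▸ Set.mem_univ z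
      exact this.resolve_left hz
    exact closure_mono hBA h3
  -- choose approximating sequences from A
  have hex : ∀ (u : frontier A) (m : ℕ), ∃ a ∈ A, dist (u : M) a < 1 / ((m : ℝ) + 1) := by
    intro u m
    exact Metric.mem_closure_iff.1 (hclA u) _ (by positivity)
  choose α hαA hαd using hex
  set U : Filter ℕ := (Filter.hyperfilter ℕ : Filter ℕ) with hU
  have hUcof : U ≤ Filter.cofinite := Filter.hyperfilter_le_cofinite
  have hUat : U ≤ Filter.atTop := by rw [← Nat.cofinite_eq_atTop]; exact hUcof
  haveI hUne : U.NeBot := Ultrafilter.neBot _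
  -- eventually the approximation is δ-close
  have hsmall : ∀ δ : ℝ, 0 < δ → ∀ᶠ m : ℕ in U, (1 : ℝ) / ((m : ℝ) + 1) < δ := by
    intro δ hδ
    apply Filter.Eventually.filter_mono hUat
    obtain ⟨N, hN⟩ := exists_nat_one_div_lt hδ
    refine Filter.eventually_atTop.2 ⟨N, fun m hm => lt_of_le_of_lt ?_ hN⟩
    apply one_div_le_one_div_of_le (by positivity)
    have : (N : ℝ) ≤ m := by exact_mod_cast hm
    linarith
  -- the order
  set T' : frontier A → frontier A → Prop :=
    fun u v => ∀ᶠ m in U, T (α u m) (α v m) with hT'def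
  have hirr : ∀ u : frontier A, ¬ T' u u := by
    intro u hu
    obtain ⟨m, hm⟩ := hu.exists
    exact hT.irrefl _ hm
  have htrans : ∀ u v w : frontier A, T' u v → T' v w → T' u w :=
    fun u v w h1 h2 => (h1.and h2).mono fun m ⟨a, b⟩ => hT.trans _ _ _ a b
  have htri : ∀ u v : frontier A, T' u v ∨ u = v ∨ T' v u := by
    intro u v
    by_cases h1 : T' u v
    · exact Or.inl h1
    by_cases h2 : T' v u
    · exact Or.inr (Or.inr h2)
    -- then eventually α u m = α v m, hence u = v
    have hne1 : ∀ᶠ m in U, ¬ T (α u m) (α v m) :=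
      (Ultrafilter.eventually_not (f := Filter.hyperfilter ℕ)).2 h1
    have hne2 : ∀ᶠ m in U, ¬ T (α v m) (α u m) :=
      (Ultrafilter.eventually_not (f := Filter.hyperfilter ℕ)).2 h2
    have heq : ∀ᶠ m in U, α u m = α v m := by
      refine (hne1.and hne2).mono fun m ⟨a, b⟩ => ?_
      rcases (haveI := hT; trichotomous (r := T) (α u m) (α v m)) with h | h | h
      · exact absurd h a
      · exact h
      · exact absurd h b
    refine Or.inr (Or.inl ?_)
    have hdist : dist (u : M) (v : M) = 0 := by
      by_contra hd
      have hpos : 0 < dist (u : M) (v : M) := lt_of_le_of_ne dist_nonneg (Ne.symm hd)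
      have hev : ∀ᶠ m in U, dist (u : M) (v : M) < dist (u : M) (v : M) :=
        ((heq.and (hsmall _ (half_pos hpos))).mono (by
          intro m ⟨he, hs⟩
          calc dist (u : M) (v : M) ≤ dist (u : M) (α u m) + dist (α v m) (v : M) := by
                rw [he]; exact dist_triangle _ _ _
            _ < dist (u:M) (v:M) / 2 + dist (u:M) (v:M) / 2 := by
                have d1 := lt_trans (hαd u m) hs
                have d2 := lt_trans (hαd v m) hs
                rw [dist_comm (α v m)]
                exact add_lt_add d1 d2
            _ = dist (u:M) (v:M) := by ring))
      obtain ⟨m, hm⟩ := hev.exists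
      exact lt_irrefl _ hm
    exact Subtype.ext (by rwa [← dist_eq_zero])
  haveI i1 : IsTrichotomous (frontier A) T' :=
    ⟨fun a b h1 h2 => ((htri a b).resolve_left h1).resolve_right h2⟩
  haveI i2 : IsIrrefl (frontier A) T' := ⟨hirr⟩
  haveI i3 : IsTrans (frontier A) T' := ⟨htrans⟩
  haveI i4 : IsStrictOrder (frontier A) T' := ⟨⟩
  refine ⟨T', ⟨⟩, ?_⟩
  -- key bound
  have key : ∀ x y : frontier A, x ≠ y → ∀ s : ℕ,
      (∀ ε : ℝ, 0 < ε → HasSnake T' (ball x ε) (ball y ε) s) → s + 1 ≤ n := by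
    intro x y hxy s hs
    have hxy' : (x : M) ≠ (y : M) := fun he => hxy (Subtype.ext he)
    have hM : ∀ ε : ℝ, 0 < ε → HasSnake T (ball (x : M) ε) (ball (y : M) ε) (s + 1) := by
      intro ε hε
      obtain ⟨u, hchain, heven, hodd⟩ := hs (ε / 2) (half_pos hε)
      -- eventually the whole chain is ordered and close
      have E1 : ∀ᶠ m in U, ∀ p : Fin (s + 1) × Fin (s + 1),
          p.1 < p.2 → T (α (u p.1) m) (α (u p.2) m) := by
        rw [Filter.eventually_all]
        rintro ⟨i, j⟩
        by_cases hij : i < j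
        · exact (hchain i j hij).mono fun m hm _ => hm
        · exact Filter.Eventually.of_forall fun m hij' => absurd hij' hij
      have E2 : ∀ᶠ m : ℕ in U, (1 : ℝ) / ((m : ℝ) + 1) < ε / 2 := hsmall _ (half_pos hε)
      obtain ⟨m, hm1, hm2⟩ := (E1.and E2).exists
      -- the extra endpoint from B
      set c : M := if Even (s + 1) then (x : M) else (y : M) with hc
      obtain ⟨β, hβB, hβd⟩ : ∃ b ∈ B, dist c b < ε := by
        apply Metric.mem_closure_iff.1 _ _ hε
        rw [hc]; split <;> [exact hclB x; exact hclB y]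
      refine ⟨Fin.snoc (fun i => α (u i) m) β, ?_, ?_, ?_⟩
      · intro i j hij
        induction j using Fin.lastCases with
        | last =>
          rw [Fin.snoc_last]
          induction i using Fin.lastCases with
          | last => exact absurd hij (lt_irrefl _)
          | cast i' =>
            rw [Fin.snoc_castSucc]
            exact hord _ (hαA (u i') m) _ hβB
        | cast j' =>
          induction i using Fin.lastCases with
          | last => exact absurd hij (not_lt.2 (le_of_lt (Fin.castSucc_lt_last j')))
          | cast i' =>
            rw [Fin.snoc_castSucc, Fin.snoc_castSucc]
            exact hm1 (i', j') (by exact_mod_cast Fin.castSucc_lt_castSucc_iff.1 hij)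
      · intro i hi
        induction i using Fin.lastCases with
        | last =>
          have hev : Even (s + 1) := by simpa using hi
          rw [Fin.snoc_last, mem_ball]
          rw [hc, if_pos hev] at hβd
          rwa [dist_comm]
        | cast i' =>
          have hi' : Even (i' : ℕ) := by simpa using hi
          rw [Fin.snoc_castSucc, mem_ball]
          have h1 : dist (u i') x < ε / 2 := mem_ball.1 (heven i' hi')
          have h1' : dist ((u i' : M)) ((x : M)) < ε / 2 := by rwa [Subtype.dist_eq] at h1
          have h2 : dist (α (u i') m) ((u i' : M)) < ε / 2 := by
            rw [dist_comm]; exact lt_trans (hαd (u i') m) hm2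
          calc dist (α (u i') m) ((x : M)) ≤ dist (α (u i') m) ((u i' : M)) + dist ((u i' : M)) ((x : M)) :=
                dist_triangle _ _ _
            _ < ε / 2 + ε / 2 := add_lt_add h2 h1'
            _ = ε := by ring
      · intro i hi
        induction i using Fin.lastCases with
        | last =>
          have hod : Odd (s + 1) := by simpa using hi
          rw [Fin.snoc_last, mem_ball]
          rw [hc, if_neg (Nat.not_even_iff_odd.2 hod)] at hβd
          rwa [dist_comm]
        | cast i' =>
          have hi' : Odd (i' : ℕ) := by simpa using hi
          rw [Fin.snoc_castSucc, mem_ball]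
          have h1 : dist (u i') y < ε / 2 := mem_ball.1 (hodd i' hi')
          have h1' : dist ((u i' : M)) ((y : M)) < ε / 2 := by rwa [Subtype.dist_eq] at h1
          have h2 : dist (α (u i') m) ((u i' : M)) < ε / 2 := by
            rw [dist_comm]; exact lt_trans (hαd (u i') m) hm2
          calc dist (α (u i') m) ((y : M)) ≤ dist (α (u i') m) ((u i' : M)) + dist ((u i' : M)) ((y : M)) :=
                dist_triangle _ _ _
            _ < ε / 2 + ε / 2 := add_lt_add h2 h1'
            _ = ε := by ring
    -- conclude s + 1 ≤ n
    have hle1 : ((s + 1 : ℕ) : ℕ∞) ≤ snakeNum T (x : M) (y : M) := by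
      exact le_iSup₂ (f := fun (t : ℕ)
        (_ : t ∈ {t : ℕ | ∀ ε : ℝ, 0 < ε → HasSnake T (ball (x:M) ε) (ball (y:M) ε) t}) =>
        (t : ℕ∞)) (s + 1) hM
    have hle2 : snakeNum T (x : M) (y : M) ≤ snakeNumSpace T := by
      calc snakeNum T (x : M) (y : M)
          ≤ ⨆ (_ : (x : M) ≠ (y : M)), snakeNum T (x : M) (y : M) :=
            le_iSup (fun _ => snakeNum T (x : M) (y : M)) hxy'
        _ ≤ ⨆ (y' : M) (_ : (x : M) ≠ y'), snakeNum T (x : M) y' :=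
            le_iSup (fun y' => ⨆ (_ : (x : M) ≠ y'), snakeNum T (x : M) y') (y : M)
        _ ≤ snakeNumSpace T :=
            le_iSup (fun x' => ⨆ (y' : M) (_ : x' ≠ y'), snakeNum T x' y') (x : M)
    have : ((s + 1 : ℕ) : ℕ∞) ≤ (n : ℕ∞) := le_trans hle1 (le_trans hle2 h)
    exact_mod_cast this
  -- finish
  refine iSup_le fun x => iSup_le fun y => iSup_le fun hxy => ?_
  refine iSup_le fun s => iSup_le fun hs => ?_
  have hsn : s + 1 ≤ n := key x y hxy s hs
  calc (s : ℕ∞) ≤ ((n - 1 : ℕ) : ℕ∞) := by exact_mod_cast Nat.le_sub_one_of_lt hsn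
    _ = (n : ℕ∞) - 1 := by exact_mod_cast ENat.coe_sub n 1
end

section
/- Let (M,T) be an ordered compact metric space with Snake(M,T) < ∞, let x₀ ∈ M and r > 0. Then there exists a finite family of T-convex subsets X₁, …, X_m of M such that their union covers M ∖ B_r(x₀) and does not intersect some open ball B_ε(x₀) around x₀ (for some ε > 0). -/
open Metric Set

/-- A subset `X` of an ordered space is `T`-convex if whenever `x <_T y <_T z`
and `x, z ∈ X`, also `y ∈ X`. -/
def TConvex {M : Type*} (T : M → M → Prop) (X : Set M) : Prop :=
  ∀ x y z : M, T x y → T y z → x ∈ X → z ∈ X → y ∈ X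

section SnakeHelpers

variable {M : Type*}

/-- The `T`-convex hull of the "component" of `u` relative to the obstacle set `B`. -/
def Cset (T : M → M → Prop) (B : Set M) (u : M) : Set M :=
  {z | z ∉ B ∧ ∀ b ∈ B, ¬(T u b ∧ T b z) ∧ ¬(T z b ∧ T b u)}

theorem mem_Cset_self (T : M → M → Prop) (hT : IsStrictTotalOrder M T) {B : Set M} {u : M}
    (hu : u ∉ B) : u ∈ Cset T B u := by
  haveI := hT
  exact ⟨hu, fun b _ => ⟨fun h => asymm h.1 h.2, fun h => asymm h.1 h.2⟩⟩

theorem Cset_subset (T : M → M → Prop) (hT : IsStrictTotalOrder M T) {B : Set M} {u u' : M}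
    (hu : u ∉ B) (h' : u' ∈ Cset T B u) : Cset T B u ⊆ Cset T B u' := by
  haveI := hT
  intro z hz
  refine ⟨hz.1, fun b hb => ⟨?_, ?_⟩⟩
  · rintro ⟨h1, h2⟩
    rcases trichotomous_of T b u with hbu | rfl | hub
    · exact (h'.2 b hb).2 ⟨h1, hbu⟩
    · exact hu hb
    · exact (hz.2 b hb).1 ⟨hub, h2⟩
  · rintro ⟨h1, h2⟩
    rcases trichotomous_of T b u with hbu | rfl | hub
    · exact (hz.2 b hb).2 ⟨h1, hbu⟩
    · exact hu hb
    · exact (h'.2 b hb).1 ⟨hub, h2⟩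

theorem Cset_eq (T : M → M → Prop) (hT : IsStrictTotalOrder M T) {B : Set M} {u u' : M}
    (hu : u ∉ B) (hu' : u' ∉ B) (h' : u' ∈ Cset T B u) : Cset T B u = Cset T B u' := by
  have hmem : u ∈ Cset T B u' := ⟨hu, fun b hb => ⟨(h'.2 b hb).2, (h'.2 b hb).1⟩⟩
  exact subset_antisymm (Cset_subset T hT hu h') (Cset_subset T hT hu' hmem)

theorem Cset_tconvex (T : M → M → Prop) (hT : IsStrictTotalOrder M T) {B : Set M} {u : M}
    (hu : u ∉ B) : TConvex T (Cset T B u) := by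
  haveI := hT
  intro x y z hxy hyz hx hz
  refine ⟨?_, fun b hb => ⟨?_, ?_⟩⟩
  · intro hyB
    rcases trichotomous_of T y u with h | rfl | h
    · exact (hx.2 y hyB).2 ⟨hxy, h⟩
    · exact hu hyB
    · exact (hz.2 y hyB).1 ⟨h, hyz⟩
  · rintro ⟨h1, h2⟩
    exact (hz.2 b hb).1 ⟨h1, _root_.trans h2 hyz⟩
  · rintro ⟨h1, h2⟩
    exact (hx.2 b hb).2 ⟨_root_.trans hxy h1, h2⟩

theorem HasSnake.mono {T : M → M → Prop} {U₁ U₂ U₁' U₂' : Set M} {s : ℕ}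
    (h : HasSnake T U₁ U₂ s) (h1 : U₁ ⊆ U₁') (h2 : U₂ ⊆ U₂') : HasSnake T U₁' U₂' s := by
  obtain ⟨a, ha1, ha2, ha3⟩ := h
  exact ⟨a, ha1, fun i hi => h1 (ha2 i hi), fun i hi => h2 (ha3 i hi)⟩

theorem HasSnake.trunc {T : M → M → Prop} {U₁ U₂ : Set M} {s l : ℕ}
    (h : HasSnake T U₁ U₂ s) (hl : l ≤ s) : HasSnake T U₁ U₂ l := by
  obtain ⟨a, ha1, ha2, ha3⟩ := h
  refine ⟨fun i => a (Fin.castLE (by omega) i), fun i j hij => ha1 _ _ ?_,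
    fun i hi => ha2 _ (by simpa only [Fin.coe_castLE] using hi),
    fun i hi => ha3 _ (by simpa only [Fin.coe_castLE] using hi)⟩
  simpa only [Fin.lt_def, Fin.coe_castLE] using hij

theorem snake_of_reps {M : Type*} (T : M → M → Prop) (hT : IsStrictTotalOrder M T)
    {U B : Set M} (hUB : ∀ u ∈ U, u ∉ B) : ∀ (k : ℕ) (F : Finset M), ↑F ⊆ U →
    (∀ u ∈ F, ∀ v ∈ F, u ≠ v → Cset T B u ≠ Cset T B v) → F.card = k + 1 →
    ∃ a : Fin (2*k + 1) → M,
      (∀ i j : Fin (2*k+1), i < j → T (a i) (a j)) ∧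
      (∀ i : Fin (2*k+1), Even (i : ℕ) → a i ∈ U) ∧
      (∀ i : Fin (2*k+1), Odd (i : ℕ) → a i ∈ B) ∧
      a (Fin.last (2*k)) ∈ F ∧ ∀ u ∈ F, u = a (Fin.last (2*k)) ∨ T u (a (Fin.last (2*k))) := by
  classical
  haveI := hT
  letI : LinearOrder M := linearOrderOfSTO T
  intro k
  induction k with
  | zero =>
    intro F hFU _ hcard
    obtain ⟨u, hu⟩ := Finset.card_eq_one.mp hcard
    subst hu
    refine ⟨fun _ => u,
      fun i j hij => absurd (Fin.lt_def.mp hij) (by have := i.isLt; have := j.isLt; omega),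
      fun i _ => hFU (by simp), fun i hi => ?_, by simp, by simp⟩
    have h0 : (i : ℕ) = 0 := by have := i.isLt; omega
    rw [Nat.odd_iff, h0] at hi; omega
  | succ k ih =>
    intro F hFU hdist hcard
    have hne : F.Nonempty := Finset.card_pos.mp (by omega)
    set m := F.max' hne with hm
    have hmF : m ∈ F := F.max'_mem hne
    set F' := F.erase m with hF'
    have hcard' : F'.card = k + 1 := by
      rw [hF', Finset.card_erase_of_mem hmF, hcard]; omega
    have hF'U : ↑F' ⊆ U := fun x hx => hFU (Finset.erase_subset _ _ hx)
    obtain ⟨a, ha1, ha2, ha3, hlastF, hlastmax⟩ := ih F' hF'U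
      (fun u hu v hv => hdist u (Finset.erase_subset _ _ hu) v (Finset.erase_subset _ _ hv))
      hcard'
    set w := a (Fin.last (2*k)) with hw
    have hwF : w ∈ F := Finset.erase_subset _ _ hlastF
    have hwm : w ≠ m := Finset.ne_of_mem_erase hlastF
    have hTwm : T w m := lt_of_le_of_ne (F.le_max' w hwF) hwm
    have hwB : w ∉ B := hUB w (hFU hwF)
    have hmB : m ∉ B := hUB m (hFU hmF)
    have hmC : m ∉ Cset T B w := fun hmem =>
      hdist w hwF m hmF hwm (Cset_eq T hT hwB hmB hmem)
    have hb : ∃ b ∈ B, T w b ∧ T b m := by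
      by_contra hno
      push_neg at hno
      refine hmC ⟨hmB, fun b hbB => ⟨?_, ?_⟩⟩
      · rintro ⟨h1, h2⟩; exact hno b hbB h1 h2
      · rintro ⟨h1, h2⟩; exact absurd hTwm (asymm (_root_.trans h1 h2))
    obtain ⟨b, hbB, hwb, hbm⟩ := hb
    set a' : Fin (2*(k+1)+1) → M := fun i =>
      if h : (i : ℕ) < 2*k + 1 then a ⟨i, h⟩ else if (i:ℕ) = 2*k+1 then b else m with ha'
    have e1 : ∀ (i : Fin (2*(k+1)+1)) (h : (i:ℕ) < 2*k+1), a' i = a ⟨i, h⟩ :=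
      fun i h => dif_pos h
    have e2 : ∀ (i : Fin (2*(k+1)+1)), (i:ℕ) = 2*k+1 → a' i = b := by
      intro i h
      rw [ha']
      simp only
      rw [dif_neg (by omega), if_pos h]
    have e3 : ∀ (i : Fin (2*(k+1)+1)), (i:ℕ) = 2*k+2 → a' i = m := by
      intro i h
      rw [ha']
      simp only
      rw [dif_neg (by omega), if_neg (by omega)]
    have hab : ∀ (n : ℕ) (h : n < 2*k+1), T (a ⟨n, h⟩) b := by
      intro n h
      rcases eq_or_lt_of_le (Nat.lt_succ_iff.mp h) with heq | hlt
      · have : (⟨n, h⟩ : Fin (2*k+1)) = Fin.last (2*k) := by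
          apply Fin.ext; simpa using heq
        rw [this, ← hw]; exact hwb
      · exact _root_.trans
          (ha1 ⟨n, h⟩ (Fin.last (2*k)) (by simp only [Fin.lt_def, Fin.val_last]; exact hlt)) hwb
    have hlast3 : a' (Fin.last (2*(k+1))) = m := e3 _ (by simp only [Fin.val_last]; omega)
    refine ⟨a', ?_, ?_, ?_, ?_, ?_⟩
    · intro i j hij
      have hij' : (i : ℕ) < (j : ℕ) := Fin.lt_def.mp hij
      have hjlt := j.isLt
      rcases Nat.lt_trichotomy (j : ℕ) (2*k+1) with hj | hj | hj
      · have hi : (i : ℕ) < 2*k+1 := by omega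
        rw [e1 i hi, e1 j hj]
        exact ha1 _ _ (by simp only [Fin.lt_def]; exact hij')
      · have hi : (i : ℕ) < 2*k+1 := by omega
        rw [e1 i hi, e2 j hj]
        exact hab _ hi
      · have hj2 : (j : ℕ) = 2*k+2 := by omega
        rw [e3 j hj2]
        rcases Nat.lt_trichotomy (i : ℕ) (2*k+1) with hi | hi | hi
        · rw [e1 i hi]; exact _root_.trans (hab _ hi) hbm
        · rw [e2 i hi]; exact hbm
        · exfalso; omega
    · intro i hi
      have := i.isLt
      by_cases h : (i : ℕ) < 2*k+1
      · rw [e1 i h]; exact ha2 _ (by simpa using hi)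
      · have h2 : (i : ℕ) % 2 = 0 := Nat.even_iff.mp hi
        have h3 : (i : ℕ) = 2*k+2 := by omega
        rw [e3 i h3]; exact hFU hmF
    · intro i hi
      have := i.isLt
      by_cases h : (i : ℕ) < 2*k+1
      · rw [e1 i h]; exact ha3 _ (by simpa using hi)
      · have h2 : (i : ℕ) % 2 = 1 := Nat.odd_iff.mp hi
        have h3 : (i : ℕ) = 2*k+1 := by omega
        rw [e2 i h3]; exact hbB
    · rw [hlast3]; exact hmF
    · intro u hu
      rw [hlast3]
      rcases eq_or_ne u m with h | h
      · exact Or.inl h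
      · exact Or.inr (lt_of_le_of_ne (F.le_max' u hu) h)

theorem Cset_family_finite {M : Type*} (T : M → M → Prop) (hT : IsStrictTotalOrder M T)
    {U B : Set M} (hUB : ∀ u ∈ U, u ∉ B) (L : ℕ) (hsnake : ¬ HasSnake T U B L) :
    {C : Set M | ∃ u ∈ U, C = Cset T B u}.Finite := by
  classical
  by_contra hinf
  have hinf' : {C : Set M | ∃ u ∈ U, C = Cset T B u}.Infinite := hinf
  obtain ⟨G, hG, hGcard⟩ := hinf'.exists_subset_card_eq (L + 1)
  have hrep : ∀ C ∈ G, ∃ u, u ∈ U ∧ C = Cset T B u := by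
    intro C hC
    obtain ⟨u, hu, he⟩ := hG hC
    exact ⟨u, hu, he⟩
  choose f hfU hfC using hrep
  set F : Finset M := G.attach.image (fun C => f C.1 C.2) with hFdef
  have hmemF : ∀ x ∈ F, ∃ (C : Set M) (hC : C ∈ G), x = f C hC := by
    intro x hx
    simp only [hFdef, Finset.mem_image, Finset.mem_attach, true_and] at hx
    obtain ⟨C, hC⟩ := hx
    exact ⟨C.1, C.2, hC.symm⟩
  have hFU : ↑F ⊆ U := by
    intro x hx
    obtain ⟨C, hC, rfl⟩ := hmemF x hx
    exact hfU C hC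
  have hdist : ∀ u ∈ F, ∀ v ∈ F, u ≠ v → Cset T B u ≠ Cset T B v := by
    intro u hu v hv huv heq
    obtain ⟨C, hC, rfl⟩ := hmemF u hu
    obtain ⟨C', hC', rfl⟩ := hmemF v hv
    have : C = C' := by rw [hfC C hC, hfC C' hC', heq]
    subst this
    exact huv rfl
  have hFcard : F.card = L + 1 := by
    rw [hFdef, Finset.card_image_of_injOn, Finset.card_attach, hGcard]
    intro C _ C' _ he
    simp only at he
    have : C.1 = C'.1 := by rw [hfC C.1 C.2, hfC C'.1 C'.2, he]
    exact Subtype.ext this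
  obtain ⟨a, ha1, ha2, ha3, -, -⟩ := snake_of_reps T hT hUB L F hFU hdist hFcard
  exact hsnake ((HasSnake.trunc ⟨a, ha1, ha2, ha3⟩ (by omega)) )

theorem snake_bound {M : Type*} [MetricSpace M] (T : M → M → Prop) {N : ℕ}
    (hN : snakeNumSpace T = N) {y x₀ : M} (hy : y ≠ x₀) :
    ∃ ε > 0, ¬ HasSnake T (ball y ε) (ball x₀ ε) (N + 1) := by
  by_contra h
  push_neg at h
  have hmem : (N+1) ∈ {s : ℕ | ∀ ε : ℝ, 0 < ε → HasSnake T (ball y ε) (ball x₀ ε) s} := by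
    intro ε hε
    exact h ε hε
  have h1 : ((N+1 : ℕ) : ℕ∞) ≤ snakeNum T y x₀ := le_biSup _ hmem
  have h2 : snakeNum T y x₀ ≤ snakeNumSpace T :=
    le_iSup_of_le y (le_iSup_of_le x₀ (le_iSup_of_le hy le_rfl))
  rw [hN] at h2
  have := h1.trans h2
  have := (Nat.cast_le (α := ℕ∞)).mp this
  omega


end SnakeHelpers

/-- **Lemma 2.** If `(M, T)` is an ordered compact metric space with `Snake(M,T) < ∞`,
`x₀ ∈ M` and `r > 0`, then there is a finite family of `T`-convex sets whose union
covers `M ∖ B_r(x₀)` and avoids some ball `B_ε(x₀)`. -/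
theorem exists_finite_TConvex_family
    {M : Type*} [MetricSpace M] [CompactSpace M]
    (T : M → M → Prop) (hT : IsStrictTotalOrder M T)
    (hfin : snakeNumSpace T < ⊤) (x₀ : M) (r : ℝ) (hr : 0 < r) :
    ∃ (m : ℕ) (X : Fin m → Set M) (ε : ℝ), 0 < ε ∧
      (∀ i, TConvex T (X i)) ∧
      Set.univ \ Metric.ball x₀ r ⊆ ⋃ i, X i ∧
      (⋃ i, X i) ∩ Metric.ball x₀ ε = ∅ := by
  classical
  haveI := hT
  obtain ⟨N, hN⟩ := WithTop.ne_top_iff_exists.mp hfin.ne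
  replace hN : snakeNumSpace T = (N : ℕ∞) := hN.symm
  set K : Set M := Set.univ \ Metric.ball x₀ r with hK
  have hKx : ∀ y ∈ K, y ≠ x₀ := by
    rintro y ⟨-, hy⟩ rfl
    exact hy (mem_ball_self hr)
  have hdata : ∀ y : K, ∃ δ > 0,
      (∀ u ∈ ball (y : M) δ, u ∉ ball x₀ δ) ∧
      ¬ HasSnake T (ball (y : M) δ) (ball x₀ δ) (N + 1) := by
    rintro ⟨y, hy⟩
    have hyx : y ≠ x₀ := hKx y hy
    obtain ⟨ε, hε, hsn⟩ := snake_bound T hN hyx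
    have hd : 0 < dist y x₀ := dist_pos.mpr hyx
    refine ⟨min ε (dist y x₀ / 2), lt_min hε (by linarith), ?_, ?_⟩
    · intro u hu hu'
      have h1 : dist u y < dist y x₀ / 2 :=
        lt_of_lt_of_le (mem_ball.mp hu) (min_le_right _ _)
      have h2 : dist u x₀ < dist y x₀ / 2 :=
        lt_of_lt_of_le (mem_ball.mp hu') (min_le_right _ _)
      have h3 := dist_triangle y u x₀
      rw [dist_comm y u] at h3
      linarith
    · intro hs
      exact hsn (hs.mono (ball_subset_ball (min_le_left _ _))
        (ball_subset_ball (min_le_left _ _)))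
  choose δ hδpos hδdisj hδsnake using hdata
  have hKcpt : IsCompact K := (isClosed_univ.sdiff isOpen_ball).isCompact
  have hcov : K ⊆ ⋃ y : K, ball (y : M) (δ y) := fun z hz =>
    mem_iUnion.mpr ⟨⟨z, hz⟩, mem_ball_self (hδpos _)⟩
  obtain ⟨t, ht⟩ := hKcpt.elim_finite_subcover (fun y : K => ball (y : M) (δ y))
    (fun _ => isOpen_ball) hcov
  set ε : ℝ := min r (if h : t.Nonempty then t.inf' h δ else 1) with hε
  have hεpos : 0 < ε := by
    refine lt_min hr ?_
    split_ifs with h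
    · exact (Finset.lt_inf'_iff h).mpr fun y _ => hδpos y
    · norm_num
  have hεle : ∀ y ∈ t, ε ≤ δ y := by
    intro y hy
    refine (min_le_right _ _).trans ?_
    rw [dif_pos ⟨y, hy⟩]
    exact Finset.inf'_le _ hy
  set 𝒮 : Set (Set M) :=
    ⋃ y ∈ (t : Set K), {C : Set M | ∃ u ∈ ball (y : M) (δ y), C = Cset T (ball x₀ (δ y)) u}
    with h𝒮def
  have hfin𝒮 : 𝒮.Finite :=
    Set.Finite.biUnion t.finite_toSet
      (fun y _ => Cset_family_finite T hT (hδdisj y) (N + 1) (hδsnake y))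
  have hprop : ∀ C ∈ 𝒮, TConvex T C ∧ C ∩ ball x₀ ε = ∅ := by
    intro C hC
    simp only [h𝒮def, mem_iUnion, mem_setOf_eq] at hC
    obtain ⟨y, hyt, u, hu, rfl⟩ := hC
    have huB : u ∉ ball x₀ (δ y) := hδdisj y u hu
    constructor
    · exact Cset_tconvex T hT huB
    · apply eq_empty_iff_forall_notMem.mpr
      rintro z ⟨hz1, hz2⟩
      exact hz1.1 (ball_subset_ball (hεle y hyt) hz2)
  have hcover : ∀ z ∈ K, ∃ C ∈ 𝒮, z ∈ C := by
    intro z hz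
    obtain ⟨y, hyt, hzy⟩ := by
      have := ht hz
      simpa only [mem_iUnion, exists_prop] using this
    refine ⟨Cset T (ball x₀ (δ y)) z, ?_, ?_⟩
    · simp only [h𝒮def, mem_iUnion, mem_setOf_eq]
      exact ⟨y, hyt, z, hzy, rfl⟩
    · exact mem_Cset_self T hT (hδdisj y z hzy)
  -- package
  set F := hfin𝒮.toFinset with hF
  set e := F.equivFin with he
  refine ⟨F.card, fun i => ((e.symm i : {x // x ∈ F}) : Set M), ε, hεpos, ?_, ?_, ?_⟩
  · intro i
    have hmem : ((e.symm i : {x // x ∈ F}) : Set M) ∈ 𝒮 := by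
      exact (Set.Finite.mem_toFinset hfin𝒮).mp (e.symm i).2
    exact (hprop _ hmem).1
  · intro z hz
    obtain ⟨C, hC, hzC⟩ := hcover z hz
    have hCF : C ∈ F := (Set.Finite.mem_toFinset hfin𝒮).mpr hC
    refine mem_iUnion.mpr ⟨e ⟨C, hCF⟩, ?_⟩
    rw [Equiv.symm_apply_apply]
    exact hzC
  · apply eq_empty_iff_forall_notMem.mpr
    rintro z ⟨hz1, hz2⟩
    obtain ⟨i, hi⟩ := mem_iUnion.mp hz1
    have hmem : ((e.symm i : {x // x ∈ F}) : Set M) ∈ 𝒮 := by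
      exact (Set.Finite.mem_toFinset hfin𝒮).mp (e.symm i).2
    exact eq_empty_iff_forall_notMem.mp (hprop _ hmem).2 z ⟨hi, hz2⟩
end

section
/- Let M be a separable metric space with Lebesgue covering dimension dim M ≤ n. Then there exists a total order T on M for which Snake(M,T) ≤ 2n + 1. (This extends Theorem B from compact to separable metric spaces via the compactification theorem.) -/
open Metric Set

namespace SnakeAux

/-! ### Lexicographic order on `ℕ → ℕ` -/

def SeqLt (s t : ℕ → ℕ) : Prop := ∃ l, (∀ k < l, s k = t k) ∧ s l < t l

theorem seqLt_irrefl (s : ℕ → ℕ) : ¬ SeqLt s s := by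
  rintro ⟨l, -, hl⟩; exact lt_irrefl _ hl

theorem seqLt_trans {s t u : ℕ → ℕ} (h1 : SeqLt s t) (h2 : SeqLt t u) : SeqLt s u := by
  obtain ⟨l1, he1, hl1⟩ := h1
  obtain ⟨l2, he2, hl2⟩ := h2
  rcases lt_trichotomy l1 l2 with h | h | h
  · exact ⟨l1, fun k hk => (he1 k hk).trans (he2 k (hk.trans h)), by
      rw [← he2 l1 h]; exact hl1⟩
  · exact ⟨l1, fun k hk => (he1 k hk).trans (he2 k (hk.trans_le h.le)), by
      subst h; exact hl1.trans hl2⟩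
  · exact ⟨l2, fun k hk => (he1 k (hk.trans h)).trans (he2 k hk), by
      rw [he1 l2 h]; exact hl2⟩

theorem seqLt_total {s t : ℕ → ℕ} (h : s ≠ t) : SeqLt s t ∨ SeqLt t s := by
  have hex : ∃ l, s l ≠ t l := by
    by_contra hc; push_neg at hc; exact h (funext hc)
  classical
  let l0 := Nat.find hex
  have hne : s l0 ≠ t l0 := Nat.find_spec hex
  have heq : ∀ k < l0, s k = t k := fun k hk => by
    by_contra hc; exact absurd (Nat.find_le hc : l0 ≤ k) (not_le.2 hk)
  rcases lt_or_gt_of_ne hne with h' | h'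
  · exact Or.inl ⟨l0, heq, h'⟩
  · exact Or.inr ⟨l0, fun k hk => (heq k hk).symm, h'⟩

/-- Key triple lemma: a lex-sandwich `s₁ < s₂ < s₃` where `s₁, s₃` agree up to `m`
but `s₁, s₂` differ somewhere `≤ m` is impossible. -/
theorem seqLt_sandwich {s₁ s₂ s₃ : ℕ → ℕ} {m : ℕ} (h12 : SeqLt s₁ s₂) (h23 : SeqLt s₂ s₃)
    (h13 : ∀ l ≤ m, s₁ l = s₃ l) (hd : ∃ l ≤ m, s₁ l ≠ s₂ l) : False := by
  obtain ⟨l1, he1, hl1⟩ := h12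
  obtain ⟨l2, he2, hl2⟩ := h23
  obtain ⟨ld, hldm, hldne⟩ := hd
  have hl1m : l1 ≤ m := by
    by_contra hc
    exact hldne (he1 ld (lt_of_le_of_lt hldm (not_le.1 hc)))
  rcases lt_trichotomy l1 l2 with h | h | h
  · have : s₃ l1 = s₂ l1 := (he2 l1 h).symm
    have h2 : s₁ l1 = s₃ l1 := h13 l1 hl1m
    omega
  · subst h
    have h2 : s₁ l1 = s₃ l1 := h13 l1 hl1m
    omega
  · have h1 : s₁ l2 = s₂ l2 := he1 l2 h
    have h2 : s₁ l2 = s₃ l2 := h13 l2 (le_trans (le_of_lt h) hl1m)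
    omega

/-! ### Easy shrink lemma from `CovDimLE` -/

variable {M : Type*} [MetricSpace M]

theorem easy_shrink {n : ℕ} (h : CovDimLE M (n : ℤ)) {ι : Type} [Fintype ι] [Nonempty ι]
    (Ω : ι → Set M)
    (ho : ∀ j, IsOpen (Ω j)) (hc : (⋃ j, Ω j) = univ) :
    ∃ A : ι → Set M, (∀ j, IsOpen (A j)) ∧ (⋃ j, A j) = univ ∧ (∀ j, A j ⊆ Ω j) ∧
      ∀ x : M, Set.ncard {j | x ∈ A j} ≤ n + 1 := by
  classical
  obtain ⟨𝒱, hfin, hopen, hcov, href, hord⟩ :=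
    h (Set.range Ω) (Set.finite_range Ω) (by rintro U ⟨j, rfl⟩; exact ho j)
      (by rw [Set.sUnion_range]; exact hc)
  have hassign : ∀ V ∈ 𝒱, ∃ j : ι, V ⊆ Ω j := by
    intro V hV
    obtain ⟨U, ⟨j, rfl⟩, hVU⟩ := href V hV
    exact ⟨j, hVU⟩
  let g : Set M → ι := fun V => if hV : ∃ j : ι, V ⊆ Ω j then hV.choose else Classical.arbitrary ι
  have hg : ∀ V ∈ 𝒱, V ⊆ Ω (g V) := by
    intro V hV
    have hV' : ∃ j : ι, V ⊆ Ω j := hassign V hV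
    simp only [g, dif_pos hV']
    exact hV'.choose_spec
  refine ⟨fun j => ⋃₀ {V ∈ 𝒱 | g V = j}, ?_, ?_, ?_, ?_⟩
  · intro j
    exact isOpen_sUnion (fun V hV => hopen V hV.1)
  · rw [Set.eq_univ_iff_forall]
    intro x
    have : x ∈ ⋃₀ 𝒱 := by rw [hcov]; trivial
    obtain ⟨V, hV, hxV⟩ := this
    exact Set.mem_iUnion.2 ⟨g V, Set.mem_sUnion.2 ⟨V, ⟨hV, rfl⟩, hxV⟩⟩
  · rintro j x ⟨V, ⟨hV, rfl⟩, hxV⟩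
    exact hg V hV hxV
  · intro x
    have hbound : ({V ∈ 𝒱 | x ∈ V}.ncard : ℤ) ≤ (n : ℤ) + 1 := hord x
    have hb : {V ∈ 𝒱 | x ∈ V}.ncard ≤ n + 1 := by exact_mod_cast hbound
    refine le_trans ?_ hb
    let w : ι → Set M := fun j =>
      if hj : ∃ V, V ∈ 𝒱 ∧ g V = j ∧ x ∈ V then hj.choose else ∅
    have hwspec : ∀ j : ι, x ∈ ⋃₀ {V ∈ 𝒱 | g V = j} →
        w j ∈ 𝒱 ∧ g (w j) = j ∧ x ∈ w j := by
      intro j hj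
      obtain ⟨V, ⟨hV, hgV⟩, hxV⟩ := hj
      have hex : ∃ V, V ∈ 𝒱 ∧ g V = j ∧ x ∈ V := ⟨V, hV, hgV, hxV⟩
      simp only [w, dif_pos hex]
      exact hex.choose_spec
    refine Set.ncard_le_ncard_of_injOn w ?_ ?_ ?_
    · intro j hj
      exact ⟨(hwspec j hj).1, (hwspec j hj).2.2⟩
    · intro j1 h1 j2 h2 he
      rw [← (hwspec j1 h1).2.1, ← (hwspec j2 h2).2.1, he]
    · exact hfin.subset (fun V hV => hV.1)

end SnakeAux

namespace SnakeAux

variable {M : Type*} [MetricSpace M]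

/-! ### The countable order-(n+1) refinement theorem (C0) -/

section C0

variable {n : ℕ} (W : ℕ → Set M) (E : ℕ → Set M)

/-- `DD E k` is the union of the first `k+1` closed sets. -/
def DD (k : ℕ) : Set M := ⋃ j : Fin (k + 1), E (j : ℕ)

lemma DD_closed (hEc : ∀ j, IsClosed (E j)) (k : ℕ) : IsClosed (DD E k) :=
  isClosed_iUnion_of_finite fun j => hEc _

lemma DD_mono {k k' : ℕ} (hkk' : k ≤ k') : DD E k ⊆ DD E k' := by
  intro x hx
  obtain ⟨j, hj⟩ := Set.mem_iUnion.1 hx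
  exact Set.mem_iUnion.2 ⟨⟨(j : ℕ), by omega⟩, hj⟩

lemma mem_DD_succ {k : ℕ} {x : M} (hx : x ∈ DD E (k + 1)) :
    x ∈ DD E k ∨ x ∈ E (k + 1) := by
  obtain ⟨j, hj⟩ := Set.mem_iUnion.1 hx
  rcases Nat.lt_or_ge (j : ℕ) (k + 1) with hc | hc
  · exact Or.inl (Set.mem_iUnion.2 ⟨⟨(j : ℕ), by omega⟩, hj⟩)
  · have : (j : ℕ) = k + 1 := by omega
    rw [this] at hj
    exact Or.inr hj

/-- Invariant of the stage construction. -/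
def InvC0 (k : ℕ) (H : ℕ → Set M) : Prop :=
  (∀ i, IsOpen (H i)) ∧ (∀ i, H i ⊆ W i) ∧ (∀ i, k < i → H i = ∅) ∧
    (DD E k ⊆ ⋃ i, H i) ∧ ∀ x, Set.ncard {i | x ∈ H i} ≤ n + 1

def CompatC0 (k : ℕ) (H H' : ℕ → Set M) : Prop :=
  ∀ i, H' i ⊆ H i ∪ W (k + 1) ∧ H i \ W (k + 1) ⊆ H' i

variable {W E}

lemma stepC0 (h : CovDimLE M (n : ℤ)) (hWo : ∀ i, IsOpen (W i)) (hWlf : LocallyFinite W)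
    (hEc : ∀ j, IsClosed (E j)) (hEsub : ∀ j, E j ⊆ W j)
    (k : ℕ) (H : ℕ → Set M) (hInv : InvC0 W E (n := n) k H) :
    ∃ H', InvC0 W E (n := n) (k + 1) H' ∧ CompatC0 W (k := k) H H' := by
  classical
  obtain ⟨hHo, hHsub, hHsupp, hHcov, hHord⟩ := hInv
  -- the finite auxiliary cover
  set Ω : (Fin (k + 1) ⊕ Bool) → Set M := fun j =>
    match j with
    | Sum.inl j0 => H (j0 : ℕ)
    | Sum.inr false => W (k + 1)
    | Sum.inr true => (DD E (k + 1))ᶜ with hΩ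
  have hΩo : ∀ j, IsOpen (Ω j) := by
    rintro (j0 | b)
    · exact hHo _
    · cases b
      · exact hWo _
      · exact (DD_closed E hEc _).isOpen_compl
  have hΩc : (⋃ j, Ω j) = univ := by
    rw [Set.eq_univ_iff_forall]
    intro x
    by_cases hx : x ∈ DD E (k + 1)
    · rcases mem_DD_succ E hx with hx' | hx'
      · obtain ⟨i, hi⟩ := Set.mem_iUnion.1 (hHcov hx')
        have hik : i ≤ k := by
          by_contra hc
          rw [hHsupp i (by omega)] at hi
          exact hi
        exact Set.mem_iUnion.2 ⟨Sum.inl ⟨i, by omega⟩, hi⟩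
      · exact Set.mem_iUnion.2 ⟨Sum.inr false, hEsub _ hx'⟩
    · exact Set.mem_iUnion.2 ⟨Sum.inr true, hx⟩
  -- shrink it with order ≤ n+1
  obtain ⟨A, hAo, hAc, hAsub, hAord⟩ := easy_shrink h Ω hΩo hΩc
  -- a closed shrinking of A
  obtain ⟨C, hCc, hCcl, hCsub⟩ :=
    exists_iUnion_eq_closed_subset hAo (fun x => Set.toFinite _) hAc
  -- the closed kernel to be newly covered
  set Low : Set M := ⋃ j0 : Fin (k + 1), A (Sum.inl j0) with hLow
  have hLowOpen : IsOpen Low := isOpen_iUnion fun j0 => hAo _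
  set Y : Set M := C (Sum.inr false) \ (Low ∪ A (Sum.inr true)) with hY
  have hYc : IsClosed Y := (hCcl _).sdiff (hLowOpen.union (hAo _))
  have hYsub : Y ⊆ A (Sum.inr false) := fun x hx => hCsub _ hx.1
  obtain ⟨N, hNo, hYN, hNcl⟩ :=
    normal_exists_closure_subset hYc (hAo (Sum.inr false)) hYsub
  -- the new family
  set H' : ℕ → Set M := fun i =>
    if hi : i ≤ k then A (Sum.inl ⟨i, by omega⟩) ∪ (H i \ closure N)
    else if i = k + 1 then N else ∅ with hH'
  have hH'le : ∀ i (hi : i ≤ k), H' i = A (Sum.inl ⟨i, by omega⟩) ∪ (H i \ closure N) := by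
    intro i hi; simp only [hH', dif_pos hi]
  have hH'succ : H' (k + 1) = N := by
    simp only [hH']
    rw [dif_neg (by omega : ¬ k + 1 ≤ k)]
    simp
  have hH'top : ∀ i, k + 1 < i → H' i = ∅ := by
    intro i hi
    simp only [hH', dif_neg (by omega : ¬ i ≤ k), if_neg (by omega : ¬ i = k + 1)]
  have hAsubH : ∀ (i : ℕ) (hi : i ≤ k), A (Sum.inl ⟨i, by omega⟩) ⊆ H i := by
    intro i hi
    have := hAsub (Sum.inl (⟨i, by omega⟩ : Fin (k + 1)))
    simpa [hΩ] using this
  have hclNW : closure N ⊆ W (k + 1) := by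
    refine hNcl.trans ?_
    have := hAsub (Sum.inr false)
    simpa [hΩ] using this
  refine ⟨H', ⟨?_, ?_, hH'top, ?_, ?_⟩, ?_⟩
  · -- open
    intro i
    by_cases hi : i ≤ k
    · rw [hH'le i hi]
      exact (hAo _).union ((hHo i).sdiff isClosed_closure)
    · by_cases hi' : i = k + 1
      · rw [hi', hH'succ]; exact hNo
      · rw [hH'top i (by omega)]; exact isOpen_empty
  · -- subset of W
    intro i
    by_cases hi : i ≤ k
    · rw [hH'le i hi]
      exact Set.union_subset ((hAsubH i hi).trans (hHsub i))
        ((Set.diff_subset).trans (hHsub i))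
    · by_cases hi' : i = k + 1
      · rw [hi', hH'succ]
        exact (subset_closure.trans hclNW)
      · rw [hH'top i (by omega)]; exact Set.empty_subset _
  · -- coverage of DD E (k+1)
    intro x hx
    have : x ∈ ⋃ j, C j := by rw [hCc]; trivial
    obtain ⟨j, hj⟩ := Set.mem_iUnion.1 this
    match j with
    | Sum.inl j0 =>
      refine Set.mem_iUnion.2 ⟨(j0 : ℕ), ?_⟩
      rw [hH'le (j0 : ℕ) (by omega)]
      left
      have : A (Sum.inl j0) = A (Sum.inl ⟨(j0 : ℕ), by omega⟩) := by
        congr 1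
      rw [← this]
      exact hCsub _ hj
    | Sum.inr true =>
      exfalso
      have : x ∈ (DD E (k + 1))ᶜ := by
        have h1 := hAsub (Sum.inr true)
        simp only [hΩ] at h1
        exact h1 (hCsub _ hj)
      exact this hx
    | Sum.inr false =>
      by_cases hxl : x ∈ Low
      · obtain ⟨j0, hj0⟩ := Set.mem_iUnion.1 hxl
        refine Set.mem_iUnion.2 ⟨(j0 : ℕ), ?_⟩
        rw [hH'le (j0 : ℕ) (by omega)]
        left
        have : A (Sum.inl j0) = A (Sum.inl ⟨(j0 : ℕ), by omega⟩) := by congr 1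
        rw [← this]
        exact hj0
      · by_cases hxt : x ∈ A (Sum.inr true)
        · exfalso
          have h1 := hAsub (Sum.inr true)
          simp only [hΩ] at h1
          exact h1 hxt hx
        · have hxY : x ∈ Y := ⟨hj, by
            rintro (hc | hc)
            exacts [hxl hc, hxt hc]⟩
          refine Set.mem_iUnion.2 ⟨k + 1, ?_⟩
          rw [hH'succ]
          exact hYN hxY
  · -- order
    intro x
    by_cases hx : x ∈ closure N
    · -- inject into A-memberships
      refine le_trans (Set.ncard_le_ncard_of_injOn
        (fun i => if hi : i ≤ k then (Sum.inl ⟨i, by omega⟩ : Fin (k+1) ⊕ Bool) else Sum.inr false)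
        ?_ ?_ (Set.toFinite _)) (hAord x)
      · intro i hi
        simp only [Set.mem_setOf_eq] at hi ⊢
        by_cases hik : i ≤ k
        · simp only [dif_pos hik]
          rw [hH'le i hik] at hi
          rcases hi with hi | hi
          · exact hi
          · exact absurd hx (fun _ => hi.2 hx)
        · have hik1 : i = k + 1 := by
            by_contra hc
            rw [hH'top i (by omega)] at hi
            exact hi
          simp only [dif_neg hik]
          exact hNcl hx
      · intro i1 h1 i2 h2 he
        simp only [Set.mem_setOf_eq] at h1 h2
        by_cases hik1 : i1 ≤ k <;> by_cases hik2 : i2 ≤ k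
        · simp only [dif_pos hik1, dif_pos hik2, Sum.inl.injEq, Fin.mk.injEq] at he
          exact he
        · simp only [dif_pos hik1, dif_neg hik2] at he; exact absurd he (by simp)
        · simp only [dif_neg hik1, dif_pos hik2] at he; exact absurd he (by simp)
        · -- both beyond k: both must equal k+1
          have e1 : i1 = k + 1 := by
            by_contra hc
            rw [hH'top i1 (by omega)] at h1
            exact h1
          have e2 : i2 = k + 1 := by
            by_contra hc
            rw [hH'top i2 (by omega)] at h2
            exact h2
          rw [e1, e2]
    · -- outside closure N : old memberships only
      refine le_trans (Set.ncard_le_ncard ?_ ((hWlf.point_finite x).subset ?_)) (hHord x)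
      · intro i hi
        simp only [Set.mem_setOf_eq] at hi ⊢
        by_cases hik : i ≤ k
        · rw [hH'le i hik] at hi
          rcases hi with hi | hi
          · exact hAsubH i hik hi
          · exact hi.1
        · exfalso
          by_cases hik1 : i = k + 1
          · rw [hik1, hH'succ] at hi
            exact hx (subset_closure hi)
          · rw [hH'top i (by omega)] at hi
            exact hi
      · intro i hi
        exact hHsub i hi
  · -- compat
    intro i
    constructor
    · by_cases hik : i ≤ k
      · rw [hH'le i hik]
        rintro x (hx | hx)
        · exact Or.inl (hAsubH i hik hx)
        · exact Or.inl hx.1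
      · by_cases hik1 : i = k + 1
        · rw [hik1, hH'succ]
          intro x hx
          exact Or.inr (hclNW (subset_closure hx))
        · rw [hH'top i (by omega)]
          exact Set.empty_subset _
    · by_cases hik : i ≤ k
      · rw [hH'le i hik]
        intro x hx
        right
        exact ⟨hx.1, fun hc => hx.2 (hclNW hc)⟩
      · intro x hx
        rw [hHsupp i (by omega)] at hx
        exact absurd hx.1 (Set.notMem_empty x)

lemma E_mem_DD {j k : ℕ} (hjk : j ≤ k) : E j ⊆ DD E k := by
  intro x hx
  exact Set.mem_iUnion.2 ⟨⟨j, by omega⟩, hx⟩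

theorem exists_order_refinement (h : CovDimLE M (n : ℤ)) (hWo : ∀ i, IsOpen (W i))
    (hWc : (⋃ i, W i) = univ) (hWlf : LocallyFinite W) :
    ∃ H : ℕ → Set M, (∀ i, IsOpen (H i)) ∧ (⋃ i, H i) = univ ∧ (∀ i, H i ⊆ W i) ∧
      ∀ x, Set.ncard {i | x ∈ H i} ≤ n + 1 := by
  classical
  obtain ⟨v, hvU, hvo, hvcl⟩ :=
    exists_iUnion_eq_closure_subset hWo (fun x => hWlf.point_finite x) hWc
  set E : ℕ → Set M := fun j => closure (v j) with hE
  have hEc : ∀ j, IsClosed (E j) := fun j => isClosed_closure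
  have hEsub : ∀ j, E j ⊆ W j := hvcl
  have hEcov : ∀ x : M, ∃ j, x ∈ E j := by
    intro x
    have : x ∈ ⋃ j, v j := by rw [hvU]; trivial
    obtain ⟨j, hj⟩ := Set.mem_iUnion.1 this
    exact ⟨j, subset_closure hj⟩
  -- the chain of stage families
  set next : ℕ → (ℕ → Set M) → (ℕ → Set M) := fun k H =>
    if hk : InvC0 W E (n := n) k H then (stepC0 h hWo hWlf hEc hEsub k H hk).choose else H
    with hnext
  set ch : ℕ → ℕ → Set M :=
    fun k => Nat.rec (motive := fun _ => ℕ → Set M)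
      (fun i => if i = 0 then W 0 else ∅) (fun k ih => next k ih) k with hch
  have hchS : ∀ k, ch (k + 1) = next k (ch k) := fun k => rfl
  have hInv0 : InvC0 W E (n := n) 0 (ch 0) := by
    refine ⟨?_, ?_, ?_, ?_, ?_⟩
    · intro i
      by_cases hi : i = 0 <;> simp [hch, hi, hWo 0]
    · intro i
      by_cases hi : i = 0 <;> simp [hch, hi]
    · intro i hi
      have : ch 0 i = if i = 0 then W 0 else ∅ := rfl
      rw [this, if_neg (by omega)]
    · intro x hx
      refine Set.mem_iUnion.2 ⟨0, ?_⟩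
      have : x ∈ E 0 := by
        obtain ⟨j, hj⟩ := Set.mem_iUnion.1 hx
        have : (j : ℕ) = 0 := by omega
        rwa [this] at hj
      simpa [hch] using hEsub 0 this
    · intro x
      refine le_trans (Set.ncard_le_ncard ?_ (Set.finite_singleton 0)) ?_
      · intro i hi
        simp only [Set.mem_setOf_eq, hch] at hi
        by_cases h0 : i = 0
        · simp [h0]
        · simp [h0] at hi
      · simp
  have hInv : ∀ k, InvC0 W E (n := n) k (ch k) := by
    intro k
    induction k with
    | zero => exact hInv0
    | succ k ih =>
      rw [hchS k]
      simp only [hnext, dif_pos ih]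
      exact (stepC0 h hWo hWlf hEc hEsub k (ch k) ih).choose_spec.1
  have hCompat : ∀ k, CompatC0 W (k := k) (ch k) (ch (k + 1)) := by
    intro k
    rw [hchS k]
    simp only [hnext, dif_pos (hInv k)]
    exact (stepC0 h hWo hWlf hEc hEsub k (ch k) (hInv k)).choose_spec.2
  -- local stabilization
  have hloc : ∀ x : M, ∃ O : Set M, IsOpen O ∧ x ∈ O ∧ ∃ K, ∀ j, K ≤ j → O ∩ W j = ∅ := by
    intro x
    obtain ⟨O₀, hO₀, hfin⟩ := hWlf x
    obtain ⟨O, hOsub, hOo, hxO⟩ := _root_.mem_nhds_iff.1 hO₀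
    have hfin' : {j | (W j ∩ O).Nonempty}.Finite := by
      refine hfin.subset ?_
      intro j hj
      have hj' : (W j ∩ O).Nonempty := hj
      exact Set.Nonempty.mono (Set.inter_subset_inter_right _ hOsub) hj'
    obtain ⟨b, hb⟩ := hfin'.bddAbove
    refine ⟨O, hOo, hxO, b + 1, ?_⟩
    intro j hj
    by_contra hc
    have hne : (W j ∩ O).Nonempty := by
      rw [Set.inter_comm]
      exact Set.nonempty_iff_ne_empty.2 hc
    have := hb hne
    omega
  -- stabilization of the chain on a small open set
  have hstab : ∀ (O : Set M) (K : ℕ), (∀ j, K ≤ j → O ∩ W j = ∅) →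
      ∀ i k k', K ≤ k → k ≤ k' → O ∩ ch k i = O ∩ ch k' i := by
    intro O K hOW i k k' hKk hkk'
    induction k' with
    | zero =>
      have : k = 0 := by omega
      rw [this]
    | succ k' ih =>
      rcases Nat.lt_or_ge k (k' + 1) with hlt | hge
      · have hstep : O ∩ ch k' i = O ∩ ch (k' + 1) i := by
          obtain ⟨hc1, hc2⟩ := hCompat k' i
          apply Set.eq_of_subset_of_subset
          · rintro z ⟨hzO, hz⟩
            refine ⟨hzO, hc2 ⟨hz, ?_⟩⟩
            intro hzW
            have : z ∈ O ∩ W (k' + 1) := ⟨hzO, hzW⟩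
            rw [hOW (k' + 1) (by omega)] at this
            exact this
          · rintro z ⟨hzO, hz⟩
            refine ⟨hzO, ?_⟩
            rcases hc1 hz with hz' | hz'
            · exact hz'
            · exfalso
              have : z ∈ O ∩ W (k' + 1) := ⟨hzO, hz'⟩
              rw [hOW (k' + 1) (by omega)] at this
              exact this
        rw [ih (by omega), hstep]
      · have : k = k' + 1 := by omega
        rw [this]
  -- the limit family
  set Hinf : ℕ → Set M := fun i => {x | ∃ m, ∀ k, m ≤ k → x ∈ ch k i} with hHinf
  have hHinfsub : ∀ i, Hinf i ⊆ W i := by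
    rintro i x ⟨m, hm⟩
    exact (hInv m).2.1 i (hm m le_rfl)
  refine ⟨Hinf, ?_, ?_, hHinfsub, ?_⟩
  · -- open
    intro i
    rw [isOpen_iff_forall_mem_open]
    rintro x ⟨m, hm⟩
    obtain ⟨O, hOo, hxO, K, hOW⟩ := hloc x
    set k₀ := max m K with hk₀
    refine ⟨O ∩ ch k₀ i, ?_, (hOo.inter ((hInv k₀).1 i)), ⟨hxO, hm k₀ (le_max_left _ _)⟩⟩
    rintro z ⟨hzO, hz⟩
    refine ⟨k₀, fun k hk => ?_⟩
    have heq := hstab O K hOW i k₀ k (le_max_right _ _) hk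
    have h2 : z ∈ O ∩ ch k₀ i := ⟨hzO, hz⟩
    rw [heq] at h2
    exact h2.2
  · -- cover
    rw [Set.eq_univ_iff_forall]
    intro x
    obtain ⟨k₁, hk₁⟩ := hEcov x
    obtain ⟨O, hOo, hxO, K, hOW⟩ := hloc x
    set k₀ := max k₁ K with hk₀
    have hxD : x ∈ DD E k₀ := E_mem_DD (le_max_left _ _) hk₁
    obtain ⟨i, hi⟩ := Set.mem_iUnion.1 ((hInv k₀).2.2.2.1 hxD)
    refine Set.mem_iUnion.2 ⟨i, k₀, fun k hk => ?_⟩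
    have := hstab O K hOW i k₀ k (le_max_right _ _) hk
    have hmem : x ∈ O ∩ ch k₀ i := ⟨hxO, hi⟩
    rw [this] at hmem
    exact hmem.2
  · -- order
    intro x
    have hSfin : {i | x ∈ Hinf i}.Finite :=
      (hWlf.point_finite x).subset (fun i hi => hHinfsub i hi)
    have hwit : ∀ i ∈ {i | x ∈ Hinf i}, ∃ m, ∀ k, m ≤ k → x ∈ ch k i := fun i hi => hi
    choose! f hf using hwit
    obtain ⟨b, hb⟩ := (hSfin.image f).bddAbove
    refine le_trans (Set.ncard_le_ncard ?_ ((hWlf.point_finite x).subset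
      (fun i (hi : x ∈ ch b i) => (hInv b).2.1 i hi))) ((hInv b).2.2.2.2 x)
    intro i hi
    have hfi : f i ≤ b := hb (Set.mem_image_of_mem f hi)
    exact hf i hi b hfi

end C0

/-! ### Nice covers at every scale -/

section Levels

variable {n : ℕ} [TopologicalSpace.SeparableSpace M] [Nonempty M]

theorem exists_nice_cover (h : CovDimLE M (n : ℤ)) (prev : ℕ → Set M)
    (hpo : ∀ i, IsOpen (prev i)) (hpc : (⋃ i, prev i) = univ) {δ : ℝ} (hδ : 0 < δ) :
    ∃ (G : ℕ → Set M) (par : ℕ → ℕ) (pt : ℕ → M),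
      (∀ i, IsOpen (G i)) ∧ (⋃ i, G i) = univ ∧ LocallyFinite G ∧
      (∀ i, G i ⊆ prev (par i)) ∧ (∀ i, G i ⊆ ball (pt i) δ) ∧
      ∀ x, Set.ncard {i | x ∈ closure (G i)} ≤ n + 1 := by
  classical
  set q : ℕ → M := TopologicalSpace.denseSeq M with hq
  have hqd : DenseRange q := TopologicalSpace.denseRange_denseSeq M
  set W₀ : ℕ × ℕ → Set M := fun p => prev p.1 ∩ ball (q p.2) δ with hW₀
  have hW₀o : ∀ p, IsOpen (W₀ p) := fun p => (hpo p.1).inter isOpen_ball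
  have hW₀c : (⋃ p, W₀ p) = univ := by
    rw [Set.eq_univ_iff_forall]
    intro x
    have : x ∈ ⋃ i, prev i := by rw [hpc]; trivial
    obtain ⟨i, hi⟩ := Set.mem_iUnion.1 this
    obtain ⟨j, hj⟩ := Metric.denseRange_iff.1 hqd x δ hδ
    refine Set.mem_iUnion.2 ⟨(i, j), hi, ?_⟩
    simp only [mem_ball]
    exact hj
  obtain ⟨V, hVo, hVc, hVlf, hVsub⟩ := precise_refinement W₀ hW₀o hW₀c
  set e : ℕ ≃ ℕ × ℕ := Nat.pairEquiv.symm with he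
  set W : ℕ → Set M := fun i => V (e i) with hW
  have hWo : ∀ i, IsOpen (W i) := fun i => hVo _
  have hWc : (⋃ i, W i) = univ := by
    rw [← hVc]
    exact e.surjective.iUnion_comp V
  have hWlf : LocallyFinite W := hVlf.comp_injective e.injective
  obtain ⟨H, hHo, hHc, hHsub, hHord⟩ := exists_order_refinement (W := W) h hWo hWc hWlf
  have hHpf : ∀ x : M, {i | x ∈ H i}.Finite := fun x =>
    (hWlf.point_finite x).subset fun i hi => hHsub i hi
  obtain ⟨G, hGc, hGo, hGcl⟩ := exists_iUnion_eq_closure_subset hHo hHpf hHc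
  have hGW : ∀ i, G i ⊆ W i := fun i => (subset_closure.trans (hGcl i)).trans (hHsub i)
  refine ⟨G, fun i => (e i).1, fun i => q (e i).2, hGo, hGc, hWlf.subset hGW, ?_, ?_, ?_⟩
  · intro i
    exact (hGW i).trans ((hVsub _).trans Set.inter_subset_left)
  · intro i
    exact (hGW i).trans ((hVsub _).trans Set.inter_subset_right)
  · intro x
    refine le_trans (Set.ncard_le_ncard ?_ (hHpf x)) (hHord x)
    intro i hi
    exact hGcl i hi

/-- The full hierarchy of levels. -/
theorem exists_levels (h : CovDimLE M (n : ℤ)) :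
    ∃ (G : ℕ → ℕ → Set M) (par : ℕ → ℕ → ℕ) (pt : ℕ → ℕ → M),
      (∀ l i, IsOpen (G l i)) ∧ (∀ l, (⋃ i, G l i) = univ) ∧ (∀ l, LocallyFinite (G l)) ∧
      (∀ l i, G l i ⊆ ball (pt l i) ((1/2 : ℝ)^l)) ∧
      (∀ l x, Set.ncard {i | x ∈ closure (G l i)} ≤ n + 1) ∧
      (∀ l i, G (l+1) i ⊆ G l (par l i)) := by
  classical
  set T := (ℕ → Set M) × ((ℕ → ℕ) × (ℕ → M)) with hT
  set Nice : ℕ → T → Prop := fun l t =>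
    (∀ i, IsOpen (t.1 i)) ∧ (⋃ i, t.1 i) = univ ∧ LocallyFinite t.1 ∧
    (∀ i, t.1 i ⊆ ball (t.2.2 i) ((1/2 : ℝ)^l)) ∧
    (∀ x, Set.ncard {i | x ∈ closure (t.1 i)} ≤ n + 1) with hNice
  have hstep : ∀ l (t : T), Nice l t →
      ∃ t' : T, Nice (l+1) t' ∧ ∀ i, t'.1 i ⊆ t.1 (t'.2.1 i) := by
    intro l t ht
    obtain ⟨G', par', pt', hGo, hGc, hGlf, hGpar, hGball, hGord⟩ :=
      exists_nice_cover h t.1 ht.1 ht.2.1 (δ := (1/2 : ℝ)^(l+1)) (by positivity)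
    exact ⟨(G', par', pt'), ⟨hGo, hGc, hGlf, hGball, hGord⟩, hGpar⟩
  have hbase : ∃ t : T, Nice 0 t := by
    obtain ⟨G', par', pt', hGo, hGc, hGlf, hGpar, hGball, hGord⟩ :=
      exists_nice_cover h (fun _ => univ) (fun _ => isOpen_univ)
        (by rw [Set.iUnion_const]) (δ := (1/2 : ℝ)^0) (by norm_num)
    exact ⟨(G', par', pt'), hGo, hGc, hGlf, by simpa using hGball, hGord⟩
  set next : ℕ → T → T := fun l t =>
    if ht : Nice l t then (hstep l t ht).choose else t with hnext
  set ch : ℕ → T := fun l =>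
    Nat.rec (motive := fun _ => T) hbase.choose (fun l ih => next l ih) l with hch
  have hch0 : Nice 0 (ch 0) := hbase.choose_spec
  have hchN : ∀ l, Nice l (ch l) := by
    intro l
    induction l with
    | zero => exact hch0
    | succ l ih =>
      have : ch (l+1) = next l (ch l) := rfl
      rw [this]
      simp only [hnext, dif_pos ih]
      exact (hstep l (ch l) ih).choose_spec.1
  have hchL : ∀ l, ∀ i, (ch (l+1)).1 i ⊆ (ch l).1 ((ch (l+1)).2.1 i) := by
    intro l
    have : ch (l+1) = next l (ch l) := rfl
    rw [this]
    simp only [hnext, dif_pos (hchN l)]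
    exact (hstep l (ch l) (hchN l)).choose_spec.2
  exact ⟨fun l => (ch l).1, fun l => (ch (l+1)).2.1, fun l => (ch l).2.2,
    fun l => (hchN l).1, fun l => (hchN l).2.1, fun l => (hchN l).2.2.1,
    fun l => (hchN l).2.2.2.1, fun l => (hchN l).2.2.2.2, fun l => hchL l⟩

end Levels

/-! ### König-style infrastructure -/

section Koenig

lemma exists_mem_forall_of_antitone (A : ℕ → Set ℕ) (hA : ∀ d, A (d + 1) ⊆ A d)
    (hfin : (A 0).Finite) (hne : ∀ d, (A d).Nonempty) : ∃ i, ∀ d, i ∈ A d := by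
  classical
  have hmono : ∀ d d', d ≤ d' → A d' ⊆ A d := by
    intro d d' hdd'
    induction d' with
    | zero => have : d = 0 := by omega
              rw [this]
    | succ d' ih =>
      rcases Nat.lt_or_ge d (d' + 1) with hlt | hge
      · exact (hA d').trans (ih (by omega))
      · have : d = d' + 1 := by omega
        rw [this]
  by_contra hc
  push_neg at hc
  choose dd hdd using hc
  obtain ⟨b, hb⟩ := (hfin.image dd).bddAbove
  obtain ⟨i, hi⟩ := hne b
  have hiA0 : i ∈ A 0 := hmono 0 b (by omega) hi
  have hle : dd i ≤ b := hb (Set.mem_image_of_mem dd hiA0)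
  exact hdd i (hmono (dd i) b hle hi)

lemma koenig (S : ℕ → Set ℕ) (hfin : ∀ l, (S l).Finite) (hne : ∀ l, (S l).Nonempty)
    (f : ℕ → ℕ → ℕ) (hf : ∀ l j, j ∈ S (l + 1) → f l j ∈ S l) :
    ∃ t : ℕ → ℕ, (∀ l, t l ∈ S l) ∧ ∀ l, t l = f l (t (l + 1)) := by
  classical
  set gg : ℕ → ℕ → ℕ → ℕ := fun l d =>
    Nat.rec (motive := fun _ => ℕ → ℕ) id (fun d ih => fun j => ih (f (l + d) j)) d with hgg
  have hgg0 : ∀ l j, gg l 0 j = j := fun l j => rfl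
  have hggS : ∀ l d j, gg l (d + 1) j = gg l d (f (l + d) j) := fun l d j => rfl
  have hggmem : ∀ l d j, j ∈ S (l + d) → gg l d j ∈ S l := by
    intro l d
    induction d with
    | zero => intro j hj; exact hj
    | succ d ih =>
      intro j hj
      rw [hggS]
      exact ih _ (hf (l + d) j hj)
  set R : ℕ → ℕ → Set ℕ := fun l d => gg l d '' S (l + d) with hR
  have hRsub : ∀ l d, R l d ⊆ S l := by
    rintro l d _ ⟨j, hj, rfl⟩
    exact hggmem l d j hj
  have hR0 : ∀ l, R l 0 = S l := by
    intro l
    rw [hR]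
    simp only [hgg0]
    exact Set.image_id _
  have hRanti : ∀ l d, R l (d + 1) ⊆ R l d := by
    rintro l d _ ⟨j, hj, rfl⟩
    rw [hggS]
    exact ⟨f (l + d) j, hf (l + d) j hj, rfl⟩
  have hRne : ∀ l d, (R l d).Nonempty := fun l d => (hne (l + d)).image _
  set U : ℕ → Set ℕ := fun l => {i | ∀ d, i ∈ R l d} with hU
  have hUne : ∀ l, (U l).Nonempty := by
    intro l
    obtain ⟨i, hi⟩ := exists_mem_forall_of_antitone (R l) (hRanti l)
      (by rw [hR0]; exact hfin l) (hRne l)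
    exact ⟨i, hi⟩
  have hpeel : ∀ l d j, gg l (d + 1) j = f l (gg (l + 1) d j) := by
    intro l d
    induction d with
    | zero => intro j; rfl
    | succ d ih =>
      intro j
      have e : l + 1 + d = l + d + 1 := by omega
      calc gg l (d + 1 + 1) j = gg l (d + 1) (f (l + d + 1) j) := rfl
        _ = f l (gg (l + 1) d (f (l + d + 1) j)) := ih _
        _ = f l (gg (l + 1) (d + 1) j) := by
            have h1 : gg (l + 1) (d + 1) j = gg (l + 1) d (f (l + 1 + d) j) := rfl
            rw [h1, e]
  have hUrec : ∀ l i, i ∈ U l → ∃ j, j ∈ U (l + 1) ∧ f l j = i := by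
    intro l i hi
    have happ : ∀ d, ∃ j, j ∈ R (l + 1) d ∧ f l j = i := by
      intro d
      obtain ⟨j0, hj0, hj0e⟩ := hi (d + 1)
      have e : l + (d + 1) = l + 1 + d := by omega
      rw [e] at hj0
      refine ⟨gg (l + 1) d j0, ⟨j0, hj0, rfl⟩, ?_⟩
      rw [← hpeel]
      exact hj0e
    obtain ⟨j, hj⟩ := exists_mem_forall_of_antitone
      (fun d => R (l + 1) d ∩ {j | f l j = i})
      (fun d => Set.inter_subset_inter_left _ (hRanti (l + 1) d))
      (((hfin (l + 1)).subset (by rw [hR0])).subset Set.inter_subset_left)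
      (fun d => by
        obtain ⟨j, hj1, hj2⟩ := happ d
        exact ⟨j, hj1, hj2⟩)
    exact ⟨j, fun d => (hj d).1, (hj 0).2⟩
  set nextT : ℕ → ℕ → ℕ := fun l i =>
    if h : ∃ j, j ∈ U (l + 1) ∧ f l j = i then h.choose else 0 with hnextT
  set t : ℕ → ℕ := fun l =>
    Nat.rec (motive := fun _ => ℕ) (hUne 0).choose (fun l ih => nextT l ih) l with ht
  have htU : ∀ l, t l ∈ U l := by
    intro l
    induction l with
    | zero => exact (hUne 0).choose_spec
    | succ l ih =>
      have hstep : t (l + 1) = nextT l (t l) := rfl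
      rw [hstep]
      have hex : ∃ j, j ∈ U (l + 1) ∧ f l j = t l := hUrec l (t l) ih
      simp only [hnextT, dif_pos hex]
      exact hex.choose_spec.1
  have htcons : ∀ l, t l = f l (t (l + 1)) := by
    intro l
    have hstep : t (l + 1) = nextT l (t l) := rfl
    have hex : ∃ j, j ∈ U (l + 1) ∧ f l j = t l := hUrec l (t l) (htU l)
    rw [hstep]
    simp only [hnextT, dif_pos hex]
    rw [hex.choose_spec.2]
  refine ⟨t, fun l => ?_, htcons⟩
  have := htU l 0
  rwa [hR0] at this

end Koenig

/-! ### Threads through a level system -/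

section Threads

variable {n : ℕ} (G : ℕ → ℕ → Set M) (par : ℕ → ℕ → ℕ) (pt : ℕ → ℕ → M)

/-- Bundled properties of the hierarchy of covers. -/
structure LevelSystem (n : ℕ) (G : ℕ → ℕ → Set M) (par : ℕ → ℕ → ℕ) (pt : ℕ → ℕ → M) :
    Prop where
  opn : ∀ l i, IsOpen (G l i)
  cov : ∀ l, (⋃ i, G l i) = univ
  lf : ∀ l, LocallyFinite (G l)
  small : ∀ l i, G l i ⊆ ball (pt l i) ((1/2 : ℝ)^l)
  ord : ∀ l x, Set.ncard {i | x ∈ closure (G l i)} ≤ n + 1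
  link : ∀ l i, G (l+1) i ⊆ G l (par l i)

/-- The closed sets of the system. -/
def FF (l i : ℕ) : Set M := closure (G l i)

/-- Membership levels of a point. -/
def SS (l : ℕ) (x : M) : Set ℕ := {i | x ∈ FF G l i}

/-- A thread through `x`. -/
def IsThread (t : ℕ → ℕ) (x : M) : Prop :=
  (∀ l, x ∈ FF G l (t l)) ∧ ∀ l, t l = par l (t (l + 1))

/-- Descend an index from level `l + d` to level `l`. -/
def down (l d : ℕ) : ℕ → ℕ :=
  Nat.rec (motive := fun _ => ℕ → ℕ) id (fun d ih => fun j => ih (par (l + d) j)) d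

lemma down_zero (l j : ℕ) : down par l 0 j = j := rfl

lemma down_succ_top (l d j : ℕ) : down par l (d + 1) j = down par l d (par (l + d) j) := rfl

lemma down_succ_bot (l d j : ℕ) : down par l (d + 1) j = par l (down par (l + 1) d j) := by
  induction d generalizing j with
  | zero => rfl
  | succ d ih =>
    have e : l + 1 + d = l + d + 1 := by omega
    calc down par l (d + 1 + 1) j = down par l (d + 1) (par (l + d + 1) j) := rfl
      _ = par l (down par (l + 1) d (par (l + d + 1) j)) := ih _
      _ = par l (down par (l + 1) (d + 1) j) := by
          have h1 : down par (l + 1) (d + 1) j = down par (l + 1) d (par (l + 1 + d) j) := rfl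
          rw [h1, e]

variable {G par pt}

lemma LevelSystem.F_closed (l i : ℕ) :
    IsClosed (FF G l i) := isClosed_closure

lemma LevelSystem.F_link (hs : LevelSystem n G par pt) (l i : ℕ) :
    FF G (l + 1) i ⊆ FF G l (par l i) := by
  refine closure_minimal ?_ isClosed_closure
  exact (hs.link l i).trans subset_closure

lemma LevelSystem.dist_le (hs : LevelSystem n G par pt) {l i : ℕ} {a b : M}
    (ha : a ∈ FF G l i) (hb : b ∈ FF G l i) : dist a b ≤ 2 * (1/2 : ℝ)^l := by
  have hsub : FF G l i ⊆ closedBall (pt l i) ((1/2 : ℝ)^l) :=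
    closure_minimal ((hs.small l i).trans ball_subset_closedBall) Metric.isClosed_closedBall
  have h1 := mem_closedBall.1 (hsub ha)
  have h2 := mem_closedBall.1 (hsub hb)
  calc dist a b ≤ dist a (pt l i) + dist (pt l i) b := dist_triangle _ _ _
    _ ≤ (1/2 : ℝ)^l + (1/2 : ℝ)^l := by
        refine add_le_add h1 ?_
        rw [dist_comm]
        exact h2
    _ = 2 * (1/2 : ℝ)^l := by ring

lemma LevelSystem.S_nonempty (hs : LevelSystem n G par pt) (l : ℕ) (x : M) :
    (SS G l x).Nonempty := by
  have : x ∈ ⋃ i, G l i := by rw [hs.cov l]; trivial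
  obtain ⟨i, hi⟩ := Set.mem_iUnion.1 this
  exact ⟨i, subset_closure hi⟩

/-- Locally, only finitely many sets of a level come near a point. -/
lemma LevelSystem.loc_fin (hs : LevelSystem n G par pt) (l : ℕ) (x : M) :
    ∃ r > 0, {i | (G l i ∩ ball x r).Nonempty}.Finite := by
  obtain ⟨O₀, hO₀, hfin⟩ := hs.lf l x
  obtain ⟨r, hr, hball⟩ := Metric.mem_nhds_iff.1 hO₀
  exact ⟨r, hr, hfin.subset fun i hi =>
    Set.Nonempty.mono (Set.inter_subset_inter_right _ hball) hi⟩

lemma LevelSystem.S_finite (hs : LevelSystem n G par pt) (l : ℕ) (x : M) :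
    (SS G l x).Finite := by
  obtain ⟨r, hr, hfin⟩ := hs.loc_fin l x
  refine hfin.subset ?_
  intro i hi
  have hx : x ∈ closure (G l i) := hi
  have := mem_closure_iff.1 hx (ball x r) isOpen_ball (mem_ball_self hr)
  exact this.mono (by rw [Set.inter_comm])

lemma LevelSystem.S_card (hs : LevelSystem n G par pt) (l : ℕ) (x : M) :
    (SS G l x).ncard ≤ n + 1 := hs.ord l x

lemma LevelSystem.par_mem (hs : LevelSystem n G par pt) {l j : ℕ} {x : M}
    (hj : j ∈ SS G (l + 1) x) : par l j ∈ SS G l x := hs.F_link l j hj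

lemma LevelSystem.down_mem (hs : LevelSystem n G par pt) {l d j : ℕ} {x : M}
    (hj : j ∈ SS G (l + d) x) : down par l d j ∈ SS G l x := by
  induction d generalizing j with
  | zero => exact hj
  | succ d ih =>
    rw [down_succ_top]
    exact ih (hs.par_mem hj)

/-- Threads exist through every point. -/
lemma LevelSystem.thread_exists (hs : LevelSystem n G par pt) (x : M) :
    ∃ t, IsThread G par t x := by
  obtain ⟨t, htS, htc⟩ := koenig (fun l => SS G l x) (fun l => hs.S_finite l x)
    (fun l => hs.S_nonempty l x) par (fun l j hj => hs.par_mem hj)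
  exact ⟨t, htS, htc⟩

lemma LevelSystem.thread_down (hs : LevelSystem n G par pt) {t : ℕ → ℕ} {x : M}
    (ht : IsThread G par t x) (l d : ℕ) : down par l d (t (l + d)) = t l := by
  induction d with
  | zero => rfl
  | succ d ih =>
    rw [down_succ_top]
    show down par l d (par (l + d) (t (l + d + 1))) = t l
    have h1 : par (l + d) (t (l + d + 1)) = t (l + d) := (ht.2 (l + d)).symm
    rw [h1, ih]

/-- Prefixes of threads are determined by the value at a level. -/
lemma LevelSystem.thread_prefix (hs : LevelSystem n G par pt) {t t' : ℕ → ℕ} {x x' : M}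
    (ht : IsThread G par t x) (ht' : IsThread G par t' x') {m : ℕ} (hm : t m = t' m) :
    ∀ l ≤ m, t l = t' l := by
  intro l hl
  have h1 := hs.thread_down ht l (m - l)
  have h2 := hs.thread_down ht' l (m - l)
  have e : l + (m - l) = m := by omega
  rw [e] at h1 h2
  rw [← h1, ← h2, hm]

lemma LevelSystem.diff_propagate (hs : LevelSystem n G par pt) {t t' : ℕ → ℕ} {x x' : M}
    (ht : IsThread G par t x) (ht' : IsThread G par t' x') {l₀ : ℕ} (hne : t l₀ ≠ t' l₀) :
    ∀ l, l₀ ≤ l → t l ≠ t' l := by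
  intro l hl he
  exact hne (hs.thread_prefix ht ht' he l₀ hl)

lemma LevelSystem.fiber_finset_card (hs : LevelSystem n G par pt) (x : M)
    (F : Finset (ℕ → ℕ)) (hF : ∀ t ∈ F, IsThread G par t x) : F.card ≤ n + 1 := by
  classical
  set dl : (ℕ → ℕ) → (ℕ → ℕ) → ℕ := fun t t' =>
    if h : ∃ l, t l ≠ t' l then Nat.find h else 0 with hdl
  set L : ℕ := F.sup fun t => F.sup fun t' => dl t t' with hL
  have hinj : Set.InjOn (fun t : ℕ → ℕ => t L) F := by
    intro t ht t' ht' he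
    by_contra hne
    have hex : ∃ l, t l ≠ t' l := by
      by_contra hc; push_neg at hc; exact hne (funext hc)
    have hfind : t (Nat.find hex) ≠ t' (Nat.find hex) := Nat.find_spec hex
    have hdLle : dl t t' ≤ L := by
      refine le_trans ?_ (Finset.le_sup (f := fun a => F.sup fun b => dl a b) ht)
      exact Finset.le_sup (f := fun b => dl t b) ht'
    have hdleq : dl t t' = Nat.find hex := by
      show (if h : ∃ l, t l ≠ t' l then Nat.find h else 0) = Nat.find hex
      rw [dif_pos hex]
    rw [hdleq] at hdLle
    exact hs.diff_propagate (hF t ht) (hF t' ht') hfind L hdLle he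
  have himg : F.image (fun t : ℕ → ℕ => t L) ⊆ (hs.S_finite L x).toFinset := by
    intro v hv
    obtain ⟨t, ht, rfl⟩ := Finset.mem_image.1 hv
    rw [Set.Finite.mem_toFinset]
    exact (hF t ht).1 L
  calc F.card = (F.image (fun t : ℕ → ℕ => t L)).card :=
        (Finset.card_image_of_injOn hinj).symm
    _ ≤ (hs.S_finite L x).toFinset.card := Finset.card_le_card himg
    _ = (SS G L x).ncard := (Set.ncard_eq_toFinset_card _ (hs.S_finite L x)).symm
    _ ≤ n + 1 := hs.S_card L x

lemma LevelSystem.fiber_finite (hs : LevelSystem n G par pt) (x : M) :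
    {t : ℕ → ℕ | IsThread G par t x}.Finite := by
  by_contra hc
  have hcinf : {t : ℕ → ℕ | IsThread G par t x}.Infinite := hc
  obtain ⟨F, hFsub, hFcard⟩ := hcinf.exists_subset_card_eq (n + 2)
  have := hs.fiber_finset_card x F (fun t ht => hFsub (Finset.mem_coe.2 ht))
  omega

lemma LevelSystem.fiber_ncard (hs : LevelSystem n G par pt) (x : M) :
    {t : ℕ → ℕ | IsThread G par t x}.ncard ≤ n + 1 := by
  classical
  rw [Set.ncard_eq_toFinset_card _ (hs.fiber_finite x)]
  refine hs.fiber_finset_card x _ (fun t ht => ?_)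
  exact ((hs.fiber_finite x).mem_toFinset).1 ht

/-- The crucial stability lemma: near `x`, every thread's level-`m` index is the
level-`m` index of some thread of `x`. -/
lemma LevelSystem.prefix_stable (hs : LevelSystem n G par pt) (x : M) (m : ℕ) :
    ∃ ε > 0, ∀ y ∈ ball x ε, ∀ u, IsThread G par u y →
      ∃ t, IsThread G par t x ∧ t m = u m := by
  classical
  by_contra hcon
  push_neg at hcon
  have hseq : ∀ k : ℕ, ∃ y, y ∈ ball x (1/((k:ℝ)+1)) ∧ ∃ u, IsThread G par u y ∧
      ∀ t, IsThread G par t x → t m ≠ u m := by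
    intro k
    obtain ⟨y, hy, u, hu, hcontra⟩ := hcon (1/((k:ℝ)+1)) (by positivity)
    exact ⟨y, hy, u, hu, hcontra⟩
  choose y hy u hu hcontra using hseq
  have hyx : ∀ k : ℕ, dist (y k) x < 1/((k:ℝ)+1) := fun k => mem_ball.1 (hy k)
  -- key pigeonhole step
  have key : ∀ (L : ℕ) (I : Set ℕ), I.Infinite →
      ∃ j, x ∈ FF G L j ∧ {k | k ∈ I ∧ u k L = j}.Infinite := by
    intro L I hI
    obtain ⟨r, hr, hfin⟩ := hs.loc_fin L x
    obtain ⟨K, hK⟩ := exists_nat_one_div_lt hr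
    set I' : Set ℕ := {k | k ∈ I ∧ K ≤ k} with hI'
    have hI'inf : I'.Infinite := by
      have : I \ {k | k < K} ⊆ I' := by
        rintro k ⟨hk1, hk2⟩
        exact ⟨hk1, by simpa using hk2⟩
      exact ((hI.diff (Set.finite_lt_nat K)).mono this)
    have hmem : ∀ k ∈ I', u k L ∈ {i | (G L i ∩ ball x r).Nonempty} := by
      rintro k ⟨hkI, hkK⟩
      have hyr : y k ∈ ball x r := by
        rw [mem_ball]
        refine lt_trans (lt_of_lt_of_le (hyx k) ?_) hK
        apply one_div_le_one_div_of_le (by positivity)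
        have : (K : ℝ) ≤ (k : ℝ) := by exact_mod_cast hkK
        linarith
      have hcl : y k ∈ closure (G L (u k L)) := (hu k).1 L
      have := mem_closure_iff.1 hcl (ball x r) isOpen_ball hyr
      exact this.mono (by rw [Set.inter_comm])
    have hpigeon : ∃ j, {k | k ∈ I' ∧ u k L = j}.Infinite := by
      by_contra hall
      push_neg at hall
      have hsub : I' ⊆ ⋃ j ∈ {i | (G L i ∩ ball x r).Nonempty}, {k | k ∈ I' ∧ u k L = j} := by
        intro k hk
        exact Set.mem_biUnion (hmem k hk) ⟨hk, rfl⟩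
      exact hI'inf (hfin.biUnion (fun j _ => hall j) |>.subset hsub)
    obtain ⟨j, hjinf⟩ := hpigeon
    have hxj : x ∈ FF G L j := by
      have hcl : x ∈ closure (FF G L j) := by
        rw [Metric.mem_closure_iff]
        intro ε hε
        obtain ⟨K', hK'⟩ := exists_nat_one_div_lt hε
        obtain ⟨k, hk, hkgt⟩ := hjinf.exists_gt K'
        refine ⟨y k, ?_, ?_⟩
        · have : y k ∈ FF G L (u k L) := (hu k).1 L
          rwa [hk.2] at this
        · rw [dist_comm]
          refine lt_trans (lt_of_lt_of_le (hyx k) ?_) hK'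
          apply one_div_le_one_div_of_le (by positivity)
          have : (K' : ℝ) ≤ (k : ℝ) := by exact_mod_cast hkgt.le
          linarith
      have hFc : closure (FF G L j) = FF G L j :=
        IsClosed.closure_eq (by exact isClosed_closure)
      rwa [hFc] at hcl
    refine ⟨j, hxj, hjinf.mono ?_⟩
    rintro k ⟨⟨hkI, _⟩, hkL⟩
    exact ⟨hkI, hkL⟩
  -- level-m pigeonhole
  obtain ⟨istar, hxistar, hI₀⟩ := key m Set.univ Set.infinite_univ
  set I₀ : Set ℕ := {k | k ∈ Set.univ ∧ u k m = istar} with hI₀def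
  -- the constrained thread system below x
  set SSd : ℕ → Set ℕ := fun d => {j | x ∈ FF G (m + d) j ∧ down par m d j = istar} with hSSd
  have hSSdfin : ∀ d, (SSd d).Finite := fun d =>
    (hs.S_finite (m + d) x).subset (fun j hj => hj.1)
  have hSSdne : ∀ d, (SSd d).Nonempty := by
    intro d
    obtain ⟨j, hxj, hjinf⟩ := key (m + d) I₀ hI₀
    obtain ⟨k, hk⟩ := hjinf.nonempty
    refine ⟨j, hxj, ?_⟩
    have h1 : down par m d (u k (m + d)) = u k m := hs.thread_down (hu k) m d
    rw [← hk.2, h1]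
    exact hk.1.2
  have hSSdmap : ∀ d j, j ∈ SSd (d + 1) → par (m + d) j ∈ SSd d := by
    rintro d j ⟨hj1, hj2⟩
    refine ⟨hs.par_mem hj1, ?_⟩
    rw [← down_succ_top]
    exact hj2
  obtain ⟨tt, httS, httc⟩ := koenig SSd hSSdfin hSSdne (fun d j => par (m + d) j) hSSdmap
  have htt0 : tt 0 = istar := (httS 0).2
  -- assemble the full thread
  set t : ℕ → ℕ := fun l => if m ≤ l then tt (l - m) else down par l (m - l) (tt 0) with htdef
  have htm : t m = istar := by
    simp only [htdef, if_pos (le_refl m), Nat.sub_self, htt0]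
  have hthread : IsThread G par t x := by
    constructor
    · intro l
      by_cases hl : m ≤ l
      · have h1 : t l = tt (l - m) := by simp only [htdef, if_pos hl]
        have h2 := (httS (l - m)).1
        have e : m + (l - m) = l := by omega
        rw [e] at h2
        rwa [h1]
      · have h1 : t l = down par l (m - l) (tt 0) := by simp only [htdef, if_neg hl]
        rw [h1]
        have h2 : x ∈ FF G (l + (m - l)) (tt 0) := by
          have e : l + (m - l) = m := by omega
          rw [e]
          exact (httS 0).1
        exact hs.down_mem h2
    · intro l
      rcases Nat.lt_trichotomy l m with hlm | hlm | hlm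
      · rcases Nat.lt_or_ge (l + 1) m with hlm1 | hlm1
        · have h1 : t l = down par l (m - l) (tt 0) := by
            simp only [htdef, if_neg (by omega : ¬ m ≤ l)]
          have h2 : t (l + 1) = down par (l + 1) (m - l - 1) (tt 0) := by
            have e : m - (l + 1) = m - l - 1 := by omega
            simp only [htdef, if_neg (by omega : ¬ m ≤ l + 1), e]
          have h3 := down_succ_bot (par := par) l (m - l - 1) (tt 0)
          rw [(by omega : m - l - 1 + 1 = m - l)] at h3
          rw [h1, h2, ← h3]
        · have hm1 : m = l + 1 := by omega
          have h1 : t l = down par l 1 (tt 0) := by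
            have e : m - l = 1 := by omega
            simp only [htdef, if_neg (by omega : ¬ m ≤ l), e]
          have h2 : t (l + 1) = tt 0 := by
            have e : l + 1 - m = 0 := by omega
            simp only [htdef, if_pos (by omega : m ≤ l + 1), e]
          rw [h1, h2]
          rfl
      · subst hlm
        have h1 : t l = tt 0 := by simp only [htdef, if_pos le_rfl, Nat.sub_self]
        have h2 : t (l + 1) = tt 1 := by
          have e : l + 1 - l = 1 := by omega
          simp only [htdef, if_pos (by omega : l ≤ l + 1), e]
        rw [h1, h2]
        have := httc 0
        simpa using this
      · have h1 : t l = tt (l - m) := by simp only [htdef, if_pos (by omega : m ≤ l)]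
        have h2 : t (l + 1) = tt (l - m + 1) := by
          have e : l + 1 - m = l - m + 1 := by omega
          simp only [htdef, if_pos (by omega : m ≤ l + 1), e]
        rw [h1, h2]
        have h3 := httc (l - m)
        have e : m + (l - m) = l := by omega
        rw [e] at h3
        exact h3
  -- contradiction
  obtain ⟨k₀, hk₀⟩ := hI₀.nonempty
  exact hcontra k₀ t hthread (by rw [htm, hk₀.2])

end Threads

/-! ### Main theorem -/

section Main

variable {n : ℕ}

theorem main_aux [TopologicalSpace.SeparableSpace M] [Nonempty M] (h : CovDimLE M (n : ℤ)) :
    ∃ T : M → M → Prop, IsStrictTotalOrder M T ∧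
      snakeNumSpace T ≤ ((2 * n + 1 : ℕ) : ℕ∞) := by
  classical
  obtain ⟨G, par, pt, hopn, hcov, hlf, hsmall, hord, hlink⟩ := exists_levels h
  have hs : LevelSystem n G par pt := ⟨hopn, hcov, hlf, hsmall, hord, hlink⟩
  choose c hc using hs.thread_exists
  have hcinj : Function.Injective c := by
    intro a b hab
    have hdist : ∀ l : ℕ, dist a b ≤ 2 * (1/2 : ℝ)^l := by
      intro l
      have h1 : a ∈ FF G l (c a l) := (hc a).1 l
      have h2 : b ∈ FF G l (c a l) := by rw [hab]; exact (hc b).1 l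
      exact hs.dist_le h1 h2
    have hd0 : dist a b ≤ 0 := by
      by_contra hpos
      push_neg at hpos
      obtain ⟨l, hl⟩ := exists_pow_lt_of_lt_one
        (show (0:ℝ) < dist a b / 2 by linarith) (by norm_num : (1/2:ℝ) < 1)
      have := hdist l
      linarith
    exact dist_le_zero.1 hd0
  set T : M → M → Prop := fun a b => SeqLt (c a) (c b) with hT
  have hSTO : IsStrictTotalOrder M T := by
    haveI h1 : IsTrichotomous M T := ⟨by
      intro a b hab' hba'
      by_contra hab
      rcases seqLt_total (fun hcc => hab (hcinj hcc)) with hlt | hlt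
      · exact hab' hlt
      · exact hba' hlt⟩
    haveI h2 : IsIrrefl M T := ⟨fun a => seqLt_irrefl _⟩
    haveI h3 : IsTrans M T := ⟨fun a b d hab hbd => seqLt_trans hab hbd⟩
    exact { toTrichotomous := h1,
            toIsStrictOrder := { toIrrefl := h2, toIsTrans := h3 } }
  refine ⟨T, hSTO, ?_⟩
  rw [snakeNumSpace]
  refine iSup_le fun x => iSup_le fun y => iSup_le fun hxy => ?_
  rw [snakeNum]
  refine iSup_le fun s => iSup_le fun hsnake => ?_
  have hsnake' : ∀ ε : ℝ, 0 < ε → HasSnake T (ball x ε) (ball y ε) s := hsnake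
  have hsle : s ≤ 2 * n + 1 := by
    by_contra hgt
    push_neg at hgt
    have hdxy : 0 < dist x y := dist_pos.2 hxy
    obtain ⟨m, hm⟩ := exists_pow_lt_of_lt_one
      (show (0:ℝ) < dist x y / 2 by linarith) (by norm_num : (1/2:ℝ) < 1)
    obtain ⟨εx, hεx, hstabx⟩ := hs.prefix_stable x m
    obtain ⟨εy, hεy, hstaby⟩ := hs.prefix_stable y m
    set ε : ℝ := min εx εy with hε
    obtain ⟨a, hmono, heven, hodd⟩ := hsnake' ε (lt_min hεx hεy)
    set v : Fin (s + 1) → ℕ := fun i => c (a i) m with hv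
    set Xm : Set ℕ := (fun t : ℕ → ℕ => t m) '' {t | IsThread G par t x} with hXm
    set Ym : Set ℕ := (fun t : ℕ → ℕ => t m) '' {t | IsThread G par t y} with hYm
    have hXmfin : Xm.Finite := (hs.fiber_finite x).image _
    have hYmfin : Ym.Finite := (hs.fiber_finite y).image _
    have hXmcard : Xm.ncard ≤ n + 1 :=
      le_trans (Set.ncard_image_le (hs.fiber_finite x)) (hs.fiber_ncard x)
    have hYmcard : Ym.ncard ≤ n + 1 :=
      le_trans (Set.ncard_image_le (hs.fiber_finite y)) (hs.fiber_ncard y)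
    have hdisj : ∀ w, w ∈ Xm → w ∈ Ym → False := by
      rintro w ⟨t, ht, hteq1⟩ ⟨t', ht', hteq2⟩
      have h1 : x ∈ FF G m (t m) := ht.1 m
      have he : t' m = t m := hteq2.trans hteq1.symm
      have h2 : y ∈ FF G m (t m) := by rw [← he]; exact ht'.1 m
      have h3 := hs.dist_le h1 h2
      linarith
    have hvX : ∀ i : Fin (s + 1), Even (i : ℕ) → v i ∈ Xm := by
      intro i hi
      have hai : a i ∈ ball x εx := ball_subset_ball (min_le_left _ _) (heven i hi)
      obtain ⟨t, ht, htm⟩ := hstabx (a i) hai (c (a i)) (hc (a i))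
      exact ⟨t, ht, htm⟩
    have hvY : ∀ i : Fin (s + 1), ¬ Even (i : ℕ) → v i ∈ Ym := by
      intro i hi
      have hai : a i ∈ ball y εy :=
        ball_subset_ball (min_le_right _ _) (hodd i (Nat.not_even_iff_odd.1 hi))
      obtain ⟨t, ht, htm⟩ := hstaby (a i) hai (c (a i)) (hc (a i))
      exact ⟨t, ht, htm⟩
    have hvne : ∀ i j : Fin (s + 1), Even (i : ℕ) → ¬ Even (j : ℕ) → v i ≠ v j := by
      intro i j hi hj he
      exact hdisj (v i) (hvX i hi) (he ▸ hvY j hj)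
    have claim : ∀ i j : Fin (s + 1), i < j → v i ≠ v j := by
      intro i j hij hveq
      have hijN : (i : ℕ) < (j : ℕ) := hij
      have same : (i : ℕ) % 2 = (j : ℕ) % 2 → False := by
        intro hpar
        have hij2 : (i : ℕ) + 1 < (j : ℕ) := by omega
        set mid : Fin (s + 1) := ⟨(i : ℕ) + 1, by omega⟩ with hmid
        have hlt1 : i < mid := by
          rw [Fin.lt_def]
          show (i : ℕ) < (i : ℕ) + 1
          omega
        have hlt2 : mid < j := by
          rw [Fin.lt_def]
          show (i : ℕ) + 1 < (j : ℕ)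
          exact hij2
        have hsand1 : SeqLt (c (a i)) (c (a mid)) := hmono i mid hlt1
        have hsand2 : SeqLt (c (a mid)) (c (a j)) := hmono mid j hlt2
        have h13 : ∀ l ≤ m, c (a i) l = c (a j) l := by
          intro l hl
          exact hs.thread_prefix (hc (a i)) (hc (a j)) hveq l hl
        have hmidpar : Even ((mid : Fin (s+1)) : ℕ) ↔ ¬ Even (i : ℕ) := by
          show Even ((i : ℕ) + 1) ↔ ¬ Even (i : ℕ)
          exact Nat.even_add_one
        have hd : ∃ l ≤ m, c (a i) l ≠ c (a mid) l := by
          refine ⟨m, le_rfl, ?_⟩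
          by_cases hpi' : Even (i : ℕ)
          · exact hvne i mid hpi' (fun hc' => (hmidpar.1 hc') hpi')
          · intro hcc
            exact hvne mid i (hmidpar.2 hpi') hpi' hcc.symm
        exact seqLt_sandwich hsand1 hsand2 h13 hd
      by_cases hpi : Even (i : ℕ) <;> by_cases hpj : Even (j : ℕ)
      · exact same (by rw [Nat.even_iff.1 hpi, Nat.even_iff.1 hpj])
      · exact hvne i j hpi hpj hveq
      · exact hvne j i hpj hpi hveq.symm
      · exact same (by
          rw [Nat.odd_iff.1 (Nat.not_even_iff_odd.1 hpi),
            Nat.odd_iff.1 (Nat.not_even_iff_odd.1 hpj)])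
    have hvinj : Function.Injective v := by
      intro i j hij
      rcases lt_trichotomy i j with hlt | heq | hlt
      · exact absurd hij (claim i j hlt)
      · exact heq
      · exact absurd hij.symm (claim j i hlt)
    have hcount : s + 1 ≤ 2 * n + 2 := by
      have hXYfin : (Xm ∪ Ym).Finite := hXmfin.union hYmfin
      have huniv : (Finset.univ.image v).card = s + 1 := by
        rw [Finset.card_image_of_injective _ hvinj, Finset.card_univ, Fintype.card_fin]
      have hsub : Finset.univ.image v ⊆ hXYfin.toFinset := by
        intro w hw
        obtain ⟨i, _, rfl⟩ := Finset.mem_image.1 hw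
        rw [Set.Finite.mem_toFinset]
        by_cases hpi : Even (i : ℕ)
        · exact Or.inl (hvX i hpi)
        · exact Or.inr (hvY i hpi)
      have hXY : hXYfin.toFinset.card ≤ 2 * n + 2 := by
        rw [← Set.ncard_eq_toFinset_card _ hXYfin]
        refine le_trans (Set.ncard_union_le _ _) ?_
        omega
      have := Finset.card_le_card hsub
      omega
    omega
  exact_mod_cast hsle

end Main

end SnakeAux

/-- **Theorem B for separable spaces.** If `M` is a separable metric space with covering
dimension at most `n`, then there exists a total order `T` on `M` with
`Snake(M,T) ≤ 2n + 1`. -/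
theorem exists_order_snake_le_of_covDim_le_separable
    {M : Type*} [MetricSpace M] [TopologicalSpace.SeparableSpace M]
    (n : ℕ) (h : CovDimLE M (n : ℤ)) :
    ∃ T : M → M → Prop, IsStrictTotalOrder M T ∧
      snakeNumSpace T ≤ ((2 * n + 1 : ℕ) : ℕ∞) := by
  rcases isEmpty_or_nonempty M with hemp | hne
  · refine ⟨fun _ _ => False, ?_, ?_⟩
    · haveI h1 : IsTrichotomous M (fun _ _ => False) := ⟨fun a => isEmptyElim a⟩
      haveI h2 : IsIrrefl M (fun _ _ => False) := ⟨fun a hf => hf⟩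
      haveI h3 : IsTrans M (fun _ _ => False) := ⟨fun _ _ _ hf _ => hf.elim⟩
      exact { toTrichotomous := h1,
              toIsStrictOrder := { toIrrefl := h2, toIsTrans := h3 } }
    · rw [snakeNumSpace]
      refine le_trans (le_of_eq (iSup_of_empty _)) bot_le
  · exact SnakeAux.main_aux h
end

section
/- Let M be a totally disconnected separable metric space, i.e. for every pair of distinct points x, y ∈ M there exists a clopen (open-and-closed) set U ⊆ M with x ∈ U and y ∈ M ∖ U. Then M admits a total order T for which Snake(M,T) ≤ 1. -/
open Metric Set

/-- Helper: if `a` agrees with `x` and `b` agrees with `y` on indices `≤ n`, `x,y` agree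
below `n` and differ at `n`, then any lex-witness for `a < b` is at `n`. -/
lemma snake_key {M : Type*} (u : ℕ → Set M) (n : ℕ) (x y a b : M)
    (hagree : ∀ m < n, (x ∈ u m ↔ y ∈ u m))
    (ha : ∀ m ≤ n, (a ∈ u m ↔ x ∈ u m))
    (hb : ∀ m ≤ n, (b ∈ u m ↔ y ∈ u m))
    (hdiff : ¬ (x ∈ u n ↔ y ∈ u n))
    (hT : ∃ k, (∀ m < k, (a ∈ u m ↔ b ∈ u m)) ∧ a ∉ u k ∧ b ∈ u k) :
    x ∉ u n ∧ y ∈ u n := by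
  obtain ⟨k, hk, hak, hbk⟩ := hT
  have hkn : k = n := by
    rcases lt_trichotomy k n with h | h | h
    · have hiff : a ∈ u k ↔ b ∈ u k :=
        (ha k h.le).trans ((hagree k h).trans (hb k h.le).symm)
      exact absurd (hiff.mpr hbk) hak
    · exact h
    · have hiff : x ∈ u n ↔ y ∈ u n :=
        (ha n le_rfl).symm.trans ((hk n h).trans (hb n le_rfl))
      exact absurd hiff hdiff
  subst hkn
  exact ⟨fun hx => hak ((ha k le_rfl).mpr hx), (hb k le_rfl).mp hbk⟩

/-- **Proposition.** A totally disconnected separable metric space admits a total order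
`T` with `Snake(M,T) ≤ 1`. -/
theorem exists_order_snake_le_one_of_totallyDisconnected
    {M : Type*} [MetricSpace M] [TopologicalSpace.SeparableSpace M]
    (htd : ∀ x y : M, x ≠ y → ∃ U : Set M, IsClopen U ∧ x ∈ U ∧ y ∉ U) :
    ∃ T : M → M → Prop, IsStrictTotalOrder M T ∧ snakeNumSpace T ≤ 1 := by
  classical
  have : SecondCountableTopology M := UniformSpace.secondCountable_of_separable M
  -- a countable separating family of clopen sets
  obtain ⟨u, hclopen, hsep⟩ :
      ∃ u : ℕ → Set M, (∀ n, IsClopen (u n)) ∧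
        ∀ x y : M, x ≠ y → ∃ n, x ∈ u n ∧ y ∉ u n := by
    set 𝒷 := TopologicalSpace.countableBasis M with h𝒷
    have hB := TopologicalSpace.isBasis_countableBasis M
    have hBc := TopologicalSpace.countable_countableBasis M
    set F : Set M → Set M → Set M := fun A B =>
      if h : ∃ V : Set M, IsClopen V ∧ A ⊆ V ∧ B ⊆ Vᶜ then h.choose else ∅ with hF
    set S : Set (Set M) := insert ∅ ((fun p : Set M × Set M => F p.1 p.2) '' (𝒷 ×ˢ 𝒷)) with hS
    have hScount : S.Countable := ((hBc.prod hBc).image _).insert _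
    obtain ⟨u, hu⟩ := hScount.exists_eq_range ⟨∅, mem_insert _ _⟩
    have hFcl : ∀ A B : Set M, IsClopen (F A B) := by
      intro A B
      by_cases h : ∃ V : Set M, IsClopen V ∧ A ⊆ V ∧ B ⊆ Vᶜ
      · simp only [hF, dif_pos h]; exact h.choose_spec.1
      · simp only [hF, dif_neg h]; exact isClopen_empty
    refine ⟨u, ?_, ?_⟩
    · intro n
      have hn : u n ∈ S := hu ▸ mem_range_self n
      rcases hn with h | ⟨p, _, hpn⟩
      · rw [h]; exact isClopen_empty
      · rw [← hpn]; exact hFcl _ _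
    · intro x y hxy
      obtain ⟨W, hW, hxW, hyW⟩ := htd x y hxy
      obtain ⟨A, hA, hxA, hAW⟩ := hB.exists_subset_of_mem_open hxW hW.isOpen
      obtain ⟨B, hBmem, hyB, hBW⟩ := hB.exists_subset_of_mem_open (show y ∈ Wᶜ from hyW)
        hW.compl.isOpen
      have hcond : ∃ V : Set M, IsClopen V ∧ A ⊆ V ∧ B ⊆ Vᶜ := ⟨W, hW, hAW, hBW⟩
      have hmem : F A B ∈ S := mem_insert_of_mem _ ⟨(A, B), mem_prod.2 ⟨hA, hBmem⟩, rfl⟩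
      rw [hu] at hmem
      obtain ⟨n, hn⟩ := hmem
      refine ⟨n, ?_, ?_⟩
      · rw [hn]
        simpa only [hF, dif_pos hcond] using hcond.choose_spec.2.1 hxA
      · rw [hn]
        simp only [hF, dif_pos hcond]
        exact fun hy => hcond.choose_spec.2.2 hyB hy
  -- the order
  set T : M → M → Prop := fun x y =>
    ∃ n, (∀ m < n, (x ∈ u m ↔ y ∈ u m)) ∧ x ∉ u n ∧ y ∈ u n with hTdef
  have hDex : ∀ x y : M, x ≠ y → ∃ n, ¬(x ∈ u n ↔ y ∈ u n) := by
    intro x y hxy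
    obtain ⟨n, h1, h2⟩ := hsep x y hxy
    exact ⟨n, fun h => h2 (h.mp h1)⟩
  refine ⟨T, ?_, ?_⟩
  · refine { trichotomous := ?_, irrefl := ?_, trans := ?_ }
    · intro x y hnxy hnyx
      refine (?_ : T x y ∨ x = y ∨ T y x).elim (fun h => absurd h hnxy)
        (fun h => h.elim id (fun h => absurd h hnyx))
      by_cases hxy : x = y
      · exact Or.inr (Or.inl hxy)
      · set n := Nat.find (hDex x y hxy) with hn
        have hmin : ∀ m < n, (x ∈ u m ↔ y ∈ u m) := fun m hm =>
          not_not.mp (Nat.find_min (hDex x y hxy) hm)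
        have hdiff : ¬(x ∈ u n ↔ y ∈ u n) := Nat.find_spec (hDex x y hxy)
        by_cases hx : x ∈ u n
        · have hy : y ∉ u n := fun hy => hdiff (iff_of_true hx hy)
          exact Or.inr (Or.inr ⟨n, fun m hm => (hmin m hm).symm, hy, hx⟩)
        · have hy : y ∈ u n := by
            by_contra hy; exact hdiff (iff_of_false hx hy)
          exact Or.inl ⟨n, hmin, hx, hy⟩
    · rintro x ⟨n, -, h1, h2⟩; exact h1 h2
    · rintro a b c ⟨n1, h1, ha1, hb1⟩ ⟨n2, h2, hb2, hc2⟩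
      rcases lt_trichotomy n1 n2 with h | h | h
      · exact ⟨n1, fun m hm => (h1 m hm).trans (h2 m (hm.trans h)), ha1, (h2 n1 h).mp hb1⟩
      · subst h; exact absurd hb1 hb2
      · exact ⟨n2, fun m hm => (h1 m (hm.trans h)).trans (h2 m hm),
          fun hx => hb2 ((h1 n2 h).mp hx), hc2⟩
  · refine iSup_le fun x => iSup_le fun y => iSup_le fun hxy => ?_
    rw [snakeNum]
    refine iSup₂_le fun s hs => ?_
    have hs1 : s ≤ 1 := by
      by_contra hs2
      push_neg at hs2
      set n := Nat.find (hDex x y hxy) with hn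
      have hmin : ∀ m < n, (x ∈ u m ↔ y ∈ u m) := fun m hm =>
        not_not.mp (Nat.find_min (hDex x y hxy) hm)
      have hdiff : ¬(x ∈ u n ↔ y ∈ u n) := Nat.find_spec (hDex x y hxy)
      -- the clopen cylinders around x and y
      have hopen : ∀ z : M, IsOpen {w : M | ∀ m ≤ n, (w ∈ u m ↔ z ∈ u m)} := by
        intro z
        have heq : {w : M | ∀ m ≤ n, (w ∈ u m ↔ z ∈ u m)} =
            ⋂ m : Fin (n + 1), (if z ∈ u m then u m else (u m)ᶜ) := by
          ext w
          simp only [mem_iInter, mem_setOf_eq]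
          constructor
          · intro h m
            by_cases hz : z ∈ u (m : ℕ) <;>
              simp [hz, (h m (Nat.lt_succ_iff.mp m.isLt)), hz]
          · intro h m hm
            have := h ⟨m, Nat.lt_succ_iff.mpr hm⟩
            by_cases hz : z ∈ u m <;> simp [hz] at this <;> simp [hz, this]
        rw [heq]
        refine isOpen_iInter_of_finite fun m => ?_
        by_cases hz : z ∈ u (m : ℕ)
        · simpa [hz] using (hclopen m).isOpen
        · simpa [hz] using (hclopen m).compl.isOpen
      obtain ⟨εx, hεx, hballx⟩ := Metric.isOpen_iff.mp (hopen x) x (fun m _ => Iff.rfl)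
      obtain ⟨εy, hεy, hbally⟩ := Metric.isOpen_iff.mp (hopen y) y (fun m _ => Iff.rfl)
      obtain ⟨a, hord, heven, hodd⟩ := hs (min εx εy) (lt_min hεx hεy)
      have h01 : (⟨0, by omega⟩ : Fin (s + 1)) < ⟨1, by omega⟩ := by simp [Fin.lt_def]
      have h12 : (⟨1, by omega⟩ : Fin (s + 1)) < ⟨2, by omega⟩ := by simp [Fin.lt_def]
      have ha0 : a ⟨0, by omega⟩ ∈ {w : M | ∀ m ≤ n, (w ∈ u m ↔ x ∈ u m)} :=
        hballx ((ball_subset_ball (min_le_left _ _)) (heven _ (by norm_num)))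
      have ha2 : a ⟨2, by omega⟩ ∈ {w : M | ∀ m ≤ n, (w ∈ u m ↔ x ∈ u m)} :=
        hballx ((ball_subset_ball (min_le_left _ _)) (heven _ (by norm_num)))
      have ha1 : a ⟨1, by omega⟩ ∈ {w : M | ∀ m ≤ n, (w ∈ u m ↔ y ∈ u m)} :=
        hbally ((ball_subset_ball (min_le_right _ _)) (hodd _ (by norm_num)))
      have k1 := snake_key u n x y _ _ hmin ha0 ha1 hdiff (hord _ _ h01)
      have k2 := snake_key u n y x _ _ (fun m hm => (hmin m hm).symm) ha1 ha2
        (fun h => hdiff h.symm) (hord _ _ h12)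
      exact k1.1 (k2.2)
    exact_mod_cast hs1
end

section
/- Let M be a compact metric space, let (U_i)_{i≥0} be a sequence of finite open covers of M such that every set in U_i has diameter at most 2^{−i}, and for each i ≥ 1 let f : U_i → U_{i−1} be a map with U ⊆ f(U) for all U ∈ U_i. Then for every point x ∈ M there exists a chain, i.e. a sequence of sets (U₀, U₁, U₂, …) with U_i ∈ U_i and U_{i−1} = f(U_i) for all i ≥ 1, such that x ∈ U_i for every i (equivalently, {x} is the intersection of the closures of the elements of the chain). -/
open Metric Set

private def iterf {M : Type*} (f : ℕ → Set M → Set M) : ℕ → ℕ → Set M → Set M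
  | _, 0, U => U
  | i, n+1, U => f i (iterf f (i+1) n U)

private lemma iterf_succ' {M : Type*} (f : ℕ → Set M → Set M) :
    ∀ (n i : ℕ) (U : Set M), iterf f i (n+1) U = iterf f i n (f (i+n) U) := by
  intro n
  induction n with
  | zero => intro i U; rfl
  | succ n ih =>
      intro i U
      show f i (iterf f (i+1) (n+1) U) = iterf f i (n+1) (f (i+(n+1)) U)
      rw [ih (i+1) U, show i+1+n = i+(n+1) by omega]
      rfl

private lemma nonempty_iInter_of_antitone' {α : Type*} (A : ℕ → Set α)
    (hA : ∀ n, A (n+1) ⊆ A n) (hne : ∀ n, (A n).Nonempty) (hfin : (A 0).Finite) :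
    (⋂ n, A n).Nonempty := by
  choose a ha using hne
  have hmono : ∀ m n : ℕ, m ≤ n → A n ⊆ A m := by
    intro m n hmn
    induction n with
    | zero => simp_all
    | succ n ih =>
        rcases Nat.lt_or_ge m (n+1) with h | h
        · exact (hA n).trans (ih (by omega))
        · have : m = n+1 := by omega
          subst this; exact subset_rfl
  have h0 : ∀ n, a n ∈ A 0 := fun n => hmono 0 n (Nat.zero_le n) (ha n)
  haveI : Finite (A 0) := hfin
  obtain ⟨y, hy⟩ := Finite.exists_infinite_fiber (fun n => (⟨a n, h0 n⟩ : A 0))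
  refine ⟨(y : α), mem_iInter.2 fun n => ?_⟩
  have : ¬ ((fun n => (⟨a n, h0 n⟩ : A 0)) ⁻¹' {y}) ⊆ Set.Iic n := by
    intro h
    exact (Set.infinite_coe_iff.1 hy) ((Set.finite_Iic n).subset h)
  obtain ⟨m, hm1, hm2⟩ := not_subset.1 this
  have : a m = (y : α) := congrArg Subtype.val hm1
  exact this ▸ hmono n m (le_of_lt (by simpa using hm2)) (ha m)

/-- Every point of a compact metric space is the intersection of (the closures of) the
elements of some chain: given finite open covers `𝒰 i` with sets of diameter at most
`2⁻ⁱ` and maps `f i : 𝒰 (i+1) → 𝒰 i` with `U ⊆ f i U`, for every `x` there is a sequence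
`c` with `c i ∈ 𝒰 i`, `c i = f i (c (i+1))`, `x ∈ c i` for all `i`, and
`⋂ i, closure (c i) = {x}`. -/
theorem exists_chain_through_point
    {M : Type*} [MetricSpace M] [CompactSpace M]
    (𝒰 : ℕ → Set (Set M))
    (hfin : ∀ i, (𝒰 i).Finite)
    (hopen : ∀ i, ∀ U ∈ 𝒰 i, IsOpen U)
    (hcover : ∀ i, ⋃₀ 𝒰 i = Set.univ)
    (hdiam : ∀ i, ∀ U ∈ 𝒰 i, Metric.diam U ≤ (1 / 2 : ℝ) ^ i)
    (f : ℕ → Set M → Set M)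
    (hf : ∀ i, ∀ U ∈ 𝒰 (i + 1), f i U ∈ 𝒰 i ∧ U ⊆ f i U) :
    ∀ x : M, ∃ c : ℕ → Set M,
      (∀ i, c i ∈ 𝒰 i) ∧
      (∀ i, c i = f i (c (i + 1))) ∧
      (∀ i, x ∈ c i) ∧
      (⋂ i, closure (c i)) = {x} := by
  intro x
  set S : ℕ → Set (Set M) := fun i => {U | U ∈ 𝒰 i ∧ x ∈ U} with hS
  have hSfin : ∀ i, (S i).Finite := fun i => (hfin i).subset (fun U hU => hU.1)
  have hSne : ∀ i, (S i).Nonempty := by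
    intro i
    have hx : x ∈ ⋃₀ 𝒰 i := (hcover i).symm ▸ mem_univ x
    obtain ⟨U, hU, hxU⟩ := hx
    exact ⟨U, hU, hxU⟩
  -- single step of f preserves S
  have hstepS : ∀ i U, U ∈ S (i+1) → f i U ∈ S i := by
    intro i U hU
    obtain ⟨h1, h2⟩ := hf i U hU.1
    exact ⟨h1, h2 hU.2⟩
  -- iterated f maps S (i+n) into S i
  have hmem : ∀ (n i : ℕ) (U : Set M), U ∈ S (i+n) → iterf f i n U ∈ S i := by
    intro n
    induction n with
    | zero => intro i U h; exact h
    | succ n ih =>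
        intro i U h
        have h' : U ∈ S ((i+1)+n) := by rwa [show (i+1)+n = i+(n+1) by omega]
        exact hstepS i _ (ih (i+1) U h')
  set Good : ℕ → Set M → Prop :=
    fun i U => ∀ n, ∃ V, V ∈ S (i+n) ∧ iterf f i n V = U with hGood
  have good_mem : ∀ i U, Good i U → U ∈ S i := by
    intro i U h
    obtain ⟨V, hV, hVe⟩ := h 0
    rwa [← hVe]
  have good_zero : ∃ U, Good 0 U := by
    have hanti : ∀ n, {U | ∃ V, V ∈ S (n+1) ∧ iterf f 0 (n+1) V = U} ⊆
        {U | ∃ V, V ∈ S n ∧ iterf f 0 n V = U} := by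
      rintro n U ⟨V, hV, hVe⟩
      refine ⟨f n V, hstepS n V hV, ?_⟩
      rw [← hVe, iterf_succ' f n 0 V, Nat.zero_add]
    have hne : ∀ n, {U | ∃ V, V ∈ S n ∧ iterf f 0 n V = U}.Nonempty := by
      intro n
      obtain ⟨V, hV⟩ := hSne n
      exact ⟨iterf f 0 n V, V, hV, rfl⟩
    have hf0 : {U | ∃ V, V ∈ S 0 ∧ iterf f 0 0 V = U}.Finite := by
      apply (hSfin 0).subset
      rintro U ⟨V, hV, hVe⟩
      rwa [← hVe]
    obtain ⟨U, hU⟩ := nonempty_iInter_of_antitone' _ hanti hne hf0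
    refine ⟨U, fun n => ?_⟩
    obtain ⟨V, hV, hVe⟩ := mem_iInter.1 hU n
    exact ⟨V, by rwa [Nat.zero_add], hVe⟩
  have good_step : ∀ i U, Good i U → ∃ V, Good (i+1) V ∧ f i V = U := by
    intro i U hU
    set A : ℕ → Set (Set M) :=
      fun n => {V | (∃ W, W ∈ S ((i+1)+n) ∧ iterf f (i+1) n W = V) ∧ f i V = U} with hA
    have hanti : ∀ n, A (n+1) ⊆ A n := by
      rintro n V ⟨⟨W, hW, hWe⟩, hfV⟩
      refine ⟨⟨f ((i+1)+n) W, ?_, ?_⟩, hfV⟩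
      · apply hstepS
        rwa [show ((i+1)+n)+1 = (i+1)+(n+1) by omega]
      · rw [← hWe, iterf_succ' f n (i+1) W]
    have hne : ∀ n, (A n).Nonempty := by
      intro n
      obtain ⟨W, hW, hWe⟩ := hU (n+1)
      refine ⟨iterf f (i+1) n W, ⟨W, ?_, rfl⟩, hWe⟩
      rwa [show (i+1)+n = i+(n+1) by omega]
    have hfA : (A 0).Finite := by
      apply (hSfin (i+1)).subset
      rintro V ⟨⟨W, hW, hWe⟩, -⟩
      rwa [← hWe]
    obtain ⟨V, hV⟩ := nonempty_iInter_of_antitone' A hanti hne hfA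
    exact ⟨V, fun n => (mem_iInter.1 hV n).1, (mem_iInter.1 hV 0).2⟩
  choose step hg hf' using good_step
  let chain : (i : ℕ) → {U : Set M // Good i U} :=
    fun i => Nat.rec ⟨good_zero.choose, good_zero.choose_spec⟩
      (fun i p => ⟨step i p.1 p.2, hg i p.1 p.2⟩) i
  refine ⟨fun i => (chain i).1, fun i => (good_mem i _ (chain i).2).1,
    fun i => (hf' i (chain i).1 (chain i).2).symm,
    fun i => (good_mem i _ (chain i).2).2, ?_⟩
  have hxc : ∀ i, x ∈ (chain i).1 := fun i => (good_mem i _ (chain i).2).2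
  apply Subset.antisymm
  · intro y hy
    simp only [mem_iInter] at hy
    have hd : ∀ i, dist y x ≤ (1/2 : ℝ)^i := by
      intro i
      calc dist y x ≤ diam (closure ((chain i).1)) :=
            dist_le_diam_of_mem
              ((isCompact_univ.isBounded).subset (subset_univ _)) (hy i)
              (subset_closure (hxc i))
        _ = diam ((chain i).1) := by rw [diam_closure]
        _ ≤ (1/2 : ℝ)^i := hdiam i _ (good_mem i _ (chain i).2).1
    have hle : dist y x ≤ 0 := by
      by_contra h
      push_neg at h
      obtain ⟨n, hn⟩ := exists_pow_lt_of_lt_one h (by norm_num : (1/2 : ℝ) < 1)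
      exact absurd (hd n) (not_le.2 hn)
    have : y = x := by
      rw [← dist_le_zero]; exact hle
    simp [this]
  · intro y hy
    simp only [mem_singleton_iff] at hy
    subst hy
    exact mem_iInter.2 fun i => subset_closure (hxc i)
end
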